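/- arXiv:1011.4671 — 5 statements merged into one kernel-verified Lean document; each statement's English description precedes it below -/
import Mathlib

section
/- Let F(x,y) = ∑_{n,m≥0} a(n,m) x^n y^m be the formal power series over ℤ whose coefficients are the numbers of 2-dimensional rook walks. Then (1 - 2x - 2y + 3xy) · F(x,y) = (1-x)(1-y) as formal power series in two variables; equivalently, F(x,y) = 1/(1 - x/(1-x) - y/(1-y)). -/
/-- The set of `d`-dimensional rook walks from the origin to `v`: a walk is a
finite sequence of steps, each step adding a positive integer amount to
exactly one coordinate (a step is recorded as a pair of the chosen coordinate
and the positive amount added). -/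
def RookWalks (d : ℕ) (v : Fin d → ℕ) : Set (List (Fin d × ℕ)) :=
  {L | (∀ s ∈ L, 0 < s.2) ∧
       ∀ i : Fin d, (L.map (fun s => if s.1 = i then s.2 else 0)).sum = v i}

/-- The number of `d`-dimensional rook walks from the origin to `v`. -/
noncomputable def rookWalkCount (d : ℕ) (v : Fin d → ℕ) : ℕ :=
  (RookWalks d v).ncard


/-- Recursive count of 2-d rook walks. -/
def rookF : ℕ → ℕ → ℕ := fun n m =>
  if n = 0 ∧ m = 0 then 1
  else (∑ k ∈ (Finset.range n).attach, rookF k.1 m)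
     + (∑ l ∈ (Finset.range m).attach, rookF n l.1)
termination_by n m => n + m
decreasing_by
  · have := Finset.mem_range.1 k.2; omega
  · have := Finset.mem_range.1 l.2; omega

lemma rookF_eq (n m : ℕ) (h : ¬(n = 0 ∧ m = 0)) :
    rookF n m = (∑ k ∈ Finset.range n, rookF k m) + (∑ l ∈ Finset.range m, rookF n l) := by
  rw [rookF, if_neg h, Finset.sum_attach _ (fun k => rookF k m), Finset.sum_attach _ (fun l => rookF n l)]

lemma rookF_zero : rookF 0 0 = 1 := by rw [rookF]; simp

lemma rookF_one_zero : rookF 1 0 = 1 := by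
  rw [rookF_eq 1 0 (by omega)]; simp [rookF_zero]

lemma rookF_zero_one : rookF 0 1 = 1 := by
  rw [rookF_eq 0 1 (by omega)]; simp [rookF_zero]

lemma rookF_one_one : rookF 1 1 = 2 := by
  rw [rookF_eq 1 1 (by omega)]; simp [rookF_one_zero, rookF_zero_one]

lemma rookF_key (n m : ℕ) (h : ¬(n = 0 ∧ m = 0)) :
    rookF (n+1) (m+1) + 3 * rookF n m = 2 * rookF n (m+1) + 2 * rookF (n+1) m := by
  have e1 := rookF_eq (n+1) (m+1) (by omega)
  have e2 := rookF_eq n (m+1) (by omega)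
  have e3 := rookF_eq (n+1) m (by omega)
  have e4 := rookF_eq n m h
  rw [Finset.sum_range_succ, Finset.sum_range_succ (fun l => rookF (n+1) l)] at e1
  rw [Finset.sum_range_succ] at e2
  rw [Finset.sum_range_succ] at e3
  omega

lemma rookF_row (n : ℕ) : rookF (n+2) 0 = 2 * rookF (n+1) 0 := by
  have e1 := rookF_eq (n+2) 0 (by omega)
  have e2 := rookF_eq (n+1) 0 (by omega)
  rw [Finset.sum_range_succ] at e1
  simp only [Finset.range_zero, Finset.sum_empty] at e1 e2
  omega

lemma rookF_col (m : ℕ) : rookF 0 (m+2) = 2 * rookF 0 (m+1) := by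
  have e1 := rookF_eq 0 (m+2) (by omega)
  have e2 := rookF_eq 0 (m+1) (by omega)
  rw [Finset.sum_range_succ] at e1
  simp only [Finset.range_zero, Finset.sum_empty] at e1 e2
  omega



/-- target after removing a final step `p` -/
def rookReduce (v : Fin 2 → ℕ) (p : Fin 2 × ℕ) : Fin 2 → ℕ :=
  Function.update v p.1 (v p.1 - p.2)

lemma rookReduce_apply (v : Fin 2 → ℕ) (p : Fin 2 × ℕ) (i : Fin 2) :
    rookReduce v p i = if i = p.1 then v p.1 - p.2 else v i := by
  simp [rookReduce, Function.update_apply]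

lemma step_mem (v : Fin 2 → ℕ) (p : Fin 2 × ℕ) (hp : 0 < p.2) (hle : p.2 ≤ v p.1)
    (L : List (Fin 2 × ℕ)) (hL : L ∈ RookWalks 2 (rookReduce v p)) :
    L ++ [p] ∈ RookWalks 2 v := by
  obtain ⟨h1, h2⟩ := hL
  constructor
  · intro s hs
    rcases List.mem_append.1 hs with h | h
    · exact h1 s h
    · simp only [List.mem_singleton] at h; subst h; exact hp
  · intro i
    have := h2 i
    rw [List.map_append, List.sum_append] at *
    simp only [List.map_cons, List.map_nil, List.sum_cons, List.sum_nil, add_zero]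
    rw [this, rookReduce_apply]
    by_cases hip : p.1 = i
    · subst hip; simp; omega
    · simp [hip, Ne.symm hip]

lemma step_rev (v : Fin 2 → ℕ) (L : List (Fin 2 × ℕ)) (p : Fin 2 × ℕ)
    (hL : L ++ [p] ∈ RookWalks 2 v) :
    0 < p.2 ∧ p.2 ≤ v p.1 ∧ L ∈ RookWalks 2 (rookReduce v p) := by
  obtain ⟨h1, h2⟩ := hL
  have hp : 0 < p.2 := h1 p (by simp)
  have hsum : ∀ i : Fin 2, (L.map (fun s => if s.1 = i then s.2 else 0)).sum
      + (if p.1 = i then p.2 else 0) = v i := by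
    intro i
    have := h2 i
    rw [List.map_append, List.sum_append] at this
    simpa using this
  have hle : p.2 ≤ v p.1 := by have := hsum p.1; simp at this; omega
  refine ⟨hp, hle, ⟨fun s hs => h1 s (List.mem_append.2 (Or.inl hs)), ?_⟩⟩
  intro i
  have := hsum i
  rw [rookReduce_apply]
  by_cases hip : i = p.1
  · subst hip; simp at this ⊢; omega
  · simp [hip, Ne.symm hip] at this ⊢; omega

lemma walks_zero (v : Fin 2 → ℕ) (h0 : v 0 = 0) (h1 : v 1 = 0) :
    RookWalks 2 v = {([] : List (Fin 2 × ℕ))} := by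
  have hv : ∀ i : Fin 2, v i = 0 := by
    intro i; fin_cases i <;> assumption
  ext L
  constructor
  · rintro ⟨ha, hb⟩
    cases L with
    | nil => rfl
    | cons s t =>
      exfalso
      have h2 := hb s.1
      simp [hv] at h2
      have h3 := ha s (by simp)
      omega
  · rintro rfl
    exact ⟨by simp, fun i => by simp [hv]⟩


lemma sum_Icc_reflect (n : ℕ) (h : ℕ → ℕ) :
    ∑ c ∈ Finset.Icc 1 n, h (n - c) = ∑ k ∈ Finset.range n, h k := by
  rw [← Finset.Ico_add_one_right_eq_Icc, Finset.sum_Ico_eq_sum_range]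
  have hn : n + 1 - 1 = n := by omega
  rw [hn, ← Finset.sum_range_reflect (fun k => h k) n]
  apply Finset.sum_congr rfl
  intro i hi
  have : n - (1 + i) = n - 1 - i := by omega
  rw [this]


theorem walks_spec : ∀ N : ℕ, ∀ v : Fin 2 → ℕ, v 0 + v 1 = N →
    ∃ t : Finset (List (Fin 2 × ℕ)), RookWalks 2 v = ↑t ∧ t.card = rookF (v 0) (v 1) := by
  intro N
  induction N using Nat.strong_induction_on with
  | _ N ih =>
    intro v hN
    by_cases h00 : v 0 = 0 ∧ v 1 = 0
    · refine ⟨{[]}, ?_, ?_⟩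
      · rw [walks_zero v h00.1 h00.2]; simp
      · simp [h00.1, h00.2, rookF_zero]
    · -- choose finsets for reduced targets
      have key : ∀ p : Fin 2 × ℕ, ∃ t : Finset (List (Fin 2 × ℕ)),
          (0 < p.2 ∧ p.2 ≤ v p.1) →
          RookWalks 2 (rookReduce v p) = ↑t ∧
            t.card = rookF (rookReduce v p 0) (rookReduce v p 1) := by
        intro p
        by_cases hp : 0 < p.2 ∧ p.2 ≤ v p.1
        · have hlt : rookReduce v p 0 + rookReduce v p 1 < N := by
            obtain ⟨i, c⟩ := p
            fin_cases i <;>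
              simp only [rookReduce_apply] at * <;> simp_all <;> omega
          obtain ⟨t, ht1, ht2⟩ := ih _ hlt (rookReduce v p) rfl
          exact ⟨t, fun _ => ⟨ht1, ht2⟩⟩
        · exact ⟨∅, fun h => absurd h hp⟩
      choose t ht using key
      set P : Finset (Fin 2 × ℕ) :=
        ({0} ×ˢ Finset.Icc 1 (v 0)) ∪ ({1} ×ˢ Finset.Icc 1 (v 1)) with hP
      have hPmem : ∀ p : Fin 2 × ℕ, p ∈ P ↔ 0 < p.2 ∧ p.2 ≤ v p.1 := by
        rintro ⟨i, c⟩
        fin_cases i <;> simp [hP] <;> omega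
      refine ⟨P.biUnion (fun p => (t p).image (fun L => L ++ [p])), ?_, ?_⟩
      · ext L
        simp only [Finset.coe_biUnion, Set.mem_iUnion, Finset.mem_coe,
          Finset.mem_image, Set.mem_setOf_eq]
        constructor
        · intro hL
          rcases List.eq_nil_or_concat' L with rfl | ⟨L', p, rfl⟩
          · exfalso
            obtain ⟨-, hs⟩ := hL
            have h0 := hs 0; have h1 := hs 1
            simp at h0 h1
            exact h00 ⟨h0.symm, h1.symm⟩
          · obtain ⟨hp1, hp2, hmem⟩ := step_rev v L' p hL
            have hpP : p ∈ P := (hPmem p).2 ⟨hp1, hp2⟩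
            have := (ht p ⟨hp1, hp2⟩).1
            rw [this] at hmem
            exact ⟨p, hpP, L', hmem, rfl⟩
        · rintro ⟨p, hpP, L', hL', rfl⟩
          obtain ⟨hp1, hp2⟩ := (hPmem p).1 hpP
          apply step_mem v p hp1 hp2
          rw [(ht p ⟨hp1, hp2⟩).1]
          exact hL'
      · rw [Finset.card_biUnion]
        · have hterm : ∀ p ∈ P, ((t p).image (fun L => L ++ [p])).card
              = rookF (rookReduce v p 0) (rookReduce v p 1) := by
            intro p hpP
            rw [Finset.card_image_of_injective _ (List.append_left_injective [p])]
            exact (ht p ((hPmem p).1 hpP)).2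
          rw [Finset.sum_congr rfl hterm]
          have hdisj : Disjoint ({(0 : Fin 2)} ×ˢ Finset.Icc 1 (v 0))
              ({(1 : Fin 2)} ×ˢ Finset.Icc 1 (v 1)) := by
            rw [Finset.disjoint_left]
            rintro ⟨i, c⟩ h1 h2
            simp at h1 h2
            exact absurd (h1.2.trans h2.2.symm) (by decide)
          rw [hP, Finset.sum_union hdisj, Finset.sum_product, Finset.sum_product]
          simp only [Finset.sum_singleton]
          have e0 : ∀ c ∈ Finset.Icc 1 (v 0),
              rookF (rookReduce v (0, c) 0) (rookReduce v (0, c) 1)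
                = rookF (v 0 - c) (v 1) := by
            intro c _; rw [rookReduce_apply, rookReduce_apply]; norm_num
          have e1 : ∀ c ∈ Finset.Icc 1 (v 1),
              rookF (rookReduce v (1, c) 0) (rookReduce v (1, c) 1)
                = rookF (v 0) (v 1 - c) := by
            intro c _; rw [rookReduce_apply, rookReduce_apply]; norm_num
          rw [Finset.sum_congr rfl e0, Finset.sum_congr rfl e1,
            sum_Icc_reflect (v 0) (fun k => rookF k (v 1)),
            sum_Icc_reflect (v 1) (fun l => rookF (v 0) l),
            rookF_eq (v 0) (v 1) h00]
        · -- pairwise disjoint images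
          rintro p hp q hq hpq
          rw [Function.onFun, Finset.disjoint_left]
          rintro L h1 h2
          simp only [Finset.mem_image] at h1 h2
          obtain ⟨L1, -, rfl⟩ := h1
          obtain ⟨L2, -, he⟩ := h2
          apply hpq
          have := congrArg List.getLast? he
          simpa using this.symm

lemma rookF_coeff_id (a b : ℕ) :
    ((rookF a b : ℤ) - (if ¬ a = 0 then 2 * (rookF (a-1) b : ℤ) else 0)
      - (if ¬ b = 0 then 2 * (rookF a (b-1) : ℤ) else 0))
      + (if ¬ (a = 0 ∨ b = 0) then 3 * (rookF (a-1) (b-1) : ℤ) else 0)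
    = (((if a = 0 ∧ b = 0 then 1 else 0) - (if a = 1 ∧ b = 0 then 1 else 0))
      - (if a = 0 ∧ b = 1 then 1 else 0)) + (if a = 1 ∧ b = 1 then 1 else 0) := by
  rcases a with _ | a
  · rcases b with _ | b
    · norm_num [rookF_zero]
    · rcases b with _ | b
      · norm_num [rookF_zero_one, rookF_zero]
      · have h' : rookF 0 (b+1+1) = 2 * rookF 0 (b+1) := rookF_col b
        simp only [Nat.add_sub_cancel]
        split_ifs <;> first | omega | tauto
  · rcases b with _ | b
    · rcases a with _ | a
      · norm_num [rookF_one_zero, rookF_zero]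
      · have h' : rookF (a+1+1) 0 = 2 * rookF (a+1) 0 := rookF_row a
        simp only [Nat.add_sub_cancel]
        split_ifs <;> first | omega | tauto
    · by_cases hab : a = 0 ∧ b = 0
      · obtain ⟨rfl, rfl⟩ := hab
        norm_num [rookF_one_one, rookF_one_zero, rookF_zero_one, rookF_zero]
      · have h' := rookF_key a b hab
        simp only [Nat.add_sub_cancel]
        split_ifs <;> first | omega | tauto


lemma rookWalkCount_eq (v : Fin 2 → ℕ) : rookWalkCount 2 v = rookF (v 0) (v 1) := by
  obtain ⟨t, h1, h2⟩ := walks_spec (v 0 + v 1) v rfl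
  rw [rookWalkCount, h1, Set.ncard_coe_finset, h2]

open MvPowerSeries

/-- The generating function `F(x,y) = ∑ a(n,m) xⁿ yᵐ` of 2-dimensional rook walk
numbers satisfies `(1 - 2x - 2y + 3xy)·F = (1-x)(1-y)`, i.e.
`F = 1/(1 - x/(1-x) - y/(1-y))`. -/
theorem rook_gf_two_dim
    (F : MvPowerSeries (Fin 2) ℤ)
    (hF : ∀ n : Fin 2 →₀ ℕ, MvPowerSeries.coeff n F =
      (rookWalkCount 2 (fun i => n i) : ℤ)) :
    (1 - 2 * X 0 - 2 * X 1 + 3 * (X 0 * X 1)) * F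
      = (1 - X (0 : Fin 2)) * (1 - X (1 : Fin 2)) := by
  have hcoeff : ∀ n : Fin 2 →₀ ℕ, MvPowerSeries.coeff n F = (rookF (n 0) (n 1) : ℤ) := by
    intro n
    rw [hF n, rookWalkCount_eq]
  set e0 : Fin 2 →₀ ℕ := Finsupp.single 0 1 with he0
  set e1 : Fin 2 →₀ ℕ := Finsupp.single 1 1 with he1
  have h2C : (2 : MvPowerSeries (Fin 2) ℤ) = monomial (0 : Fin 2 →₀ ℕ) 2 := by
    rw [monomial_zero_eq_C_apply]
    exact (map_ofNat ((C : ℤ →+* MvPowerSeries (Fin 2) ℤ)) 2).symm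
  have h3C : (3 : MvPowerSeries (Fin 2) ℤ) = monomial (0 : Fin 2 →₀ ℕ) 3 := by
    rw [monomial_zero_eq_C_apply]
    exact (map_ofNat ((C : ℤ →+* MvPowerSeries (Fin 2) ℤ)) 3).symm
  have h1M : (1 : MvPowerSeries (Fin 2) ℤ) = monomial (0 : Fin 2 →₀ ℕ) 1 := by
    rw [monomial_zero_eq_C_apply]; exact (map_one ((C : ℤ →+* MvPowerSeries (Fin 2) ℤ))).symm
  have hX0 : (X 0 : MvPowerSeries (Fin 2) ℤ) = monomial e0 1 := X_def 0
  have hX1 : (X 1 : MvPowerSeries (Fin 2) ℤ) = monomial e1 1 := X_def 1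
  have hlhs : (1 - 2 * X 0 - 2 * X 1 + 3 * (X 0 * X 1) : MvPowerSeries (Fin 2) ℤ)
      = monomial (0 : Fin 2 →₀ ℕ) 1 - monomial e0 2 - monomial e1 2
        + monomial (e0 + e1) 3 := by
    rw [h1M, h2C, h3C, hX0, hX1, monomial_mul_monomial, monomial_mul_monomial,
      monomial_mul_monomial, monomial_mul_monomial]
    norm_num
  have hrhs : ((1 - X 0) * (1 - X 1) : MvPowerSeries (Fin 2) ℤ)
      = monomial (0 : Fin 2 →₀ ℕ) 1 - monomial e0 1 - monomial e1 1
        + monomial (e0 + e1) 1 := by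
    have : ((1 - X 0) * (1 - X 1) : MvPowerSeries (Fin 2) ℤ)
        = 1 - X 0 - X 1 + X 0 * X 1 := by ring
    rw [this, h1M, hX0, hX1, monomial_mul_monomial]
    norm_num
  rw [hlhs, hrhs]
  apply MvPowerSeries.ext
  intro n
  rw [add_mul, sub_mul, sub_mul]
  rw [map_add, map_sub, map_sub, map_add, map_sub, map_sub]
  rw [coeff_monomial_mul, coeff_monomial_mul, coeff_monomial_mul, coeff_monomial_mul,
    coeff_monomial, coeff_monomial, coeff_monomial, coeff_monomial]
  have hne01 : (0 : Fin 2) ≠ 1 := by decide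
  have hee0 : e0 0 = 1 ∧ e0 1 = 0 := by
    constructor <;> simp [he0, Finsupp.single_apply]
  have hee1 : e1 0 = 0 ∧ e1 1 = 1 := by
    constructor <;> simp [he1, Finsupp.single_apply]
  have c0 : (0 : Fin 2 →₀ ℕ) ≤ n := zero_le (a := n)
  have c1 : e0 ≤ n ↔ ¬ n 0 = 0 := by
    rw [he0, Finsupp.single_le_iff]; omega
  have c2 : e1 ≤ n ↔ ¬ n 1 = 0 := by
    rw [he1, Finsupp.single_le_iff]; omega
  have c3 : e0 + e1 ≤ n ↔ ¬ (n 0 = 0 ∨ n 1 = 0) := by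
    rw [Finsupp.le_def, Fin.forall_fin_two]
    simp only [Finsupp.add_apply, hee0.1, hee0.2, hee1.1, hee1.2]
    omega
  have d0 : n = 0 ↔ n 0 = 0 ∧ n 1 = 0 := by
    rw [Finsupp.ext_iff, Fin.forall_fin_two]; simp
  have d1 : n = e0 ↔ n 0 = 1 ∧ n 1 = 0 := by
    rw [Finsupp.ext_iff, Fin.forall_fin_two, hee0.1, hee0.2]
  have d2 : n = e1 ↔ n 0 = 0 ∧ n 1 = 1 := by
    rw [Finsupp.ext_iff, Fin.forall_fin_two, hee1.1, hee1.2]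
  have d3 : n = e0 + e1 ↔ n 0 = 1 ∧ n 1 = 1 := by
    rw [Finsupp.ext_iff, Fin.forall_fin_two]
    simp only [Finsupp.add_apply, hee0.1, hee0.2, hee1.1, hee1.2]
  have v0 : MvPowerSeries.coeff (n - 0) F = (rookF (n 0) (n 1) : ℤ) := by
    rw [tsub_zero, hcoeff]
  have v1 : MvPowerSeries.coeff (n - e0) F = (rookF (n 0 - 1) (n 1) : ℤ) := by
    rw [hcoeff]
    congr 2 <;> rw [Finsupp.tsub_apply] <;> simp [hee0.1, hee0.2]
  have v2 : MvPowerSeries.coeff (n - e1) F = (rookF (n 0) (n 1 - 1) : ℤ) := by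
    rw [hcoeff]
    congr 2 <;> rw [Finsupp.tsub_apply] <;> simp [hee1.1, hee1.2]
  have v3 : MvPowerSeries.coeff (n - (e0 + e1)) F = (rookF (n 0 - 1) (n 1 - 1) : ℤ) := by
    rw [hcoeff]
    congr 2 <;> rw [Finsupp.tsub_apply] <;>
      simp [Finsupp.add_apply, hee0.1, hee0.2, hee1.1, hee1.2]
  rw [if_pos c0, v0, one_mul]
  simp only [c1, c2, c3, d0, d1, d2, d3, v1, v2, v3]
  exact rookF_coeff_id (n 0) (n 1)
end

section
/- Fix d ≥ 1 and let F(x_1,…,x_d) = ∑ a_d(n_1,…,n_d) x_1^{n_1}⋯x_d^{n_d} be the multivariate formal power series over ℤ whose coefficients are the numbers of d-dimensional rook walks. Then ( ∏_{i=1}^d (1-x_i) − ∑_{i=1}^d x_i ∏_{j≠i} (1-x_j) ) · F = ∏_{i=1}^d (1-x_i) as formal power series; equivalently, F = 1/(1 − ∑_{i=1}^d x_i/(1-x_i)). -/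
open MvPowerSeries Finset

lemma sum_coords (d : ℕ) (L : List (Fin d × ℕ)) :
    ∑ j : Fin d, (L.map (fun s => if s.1 = j then s.2 else 0)).sum
      = (L.map (fun s => s.2)).sum := by
  induction L with
  | nil => simp
  | cons s L ih =>
    simp only [List.map_cons, List.sum_cons, Finset.sum_add_distrib, ih]
    congr 1
    simp

lemma length_le_of_pos {d : ℕ} (L : List (Fin d × ℕ)) (h : ∀ s ∈ L, 0 < s.2) :
    L.length ≤ (L.map (fun s => s.2)).sum := by
  induction L with
  | nil => simp
  | cons s L ih =>
    simp only [List.map_cons, List.sum_cons, List.length_cons]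
    have h1 : 0 < s.2 := h s (List.mem_cons_self)
    have h2 := ih (fun t ht => h t (List.mem_cons_of_mem _ ht))
    omega

lemma entry_le {d : ℕ} {v : Fin d → ℕ} {L : List (Fin d × ℕ)} (hL : L ∈ RookWalks d v)
    {s : Fin d × ℕ} (hs : s ∈ L) : s.2 ≤ v s.1 := by
  have h := hL.2 s.1
  rw [← h]
  have h2 : s.2 = (fun t : Fin d × ℕ => if t.1 = s.1 then t.2 else 0) s := by simp
  rw [h2]
  exact List.single_le_sum (by simp) _ (List.mem_map_of_mem hs)

lemma walk_sum_eq {d : ℕ} {v : Fin d → ℕ} {L : List (Fin d × ℕ)} (hL : L ∈ RookWalks d v) :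
    (L.map (fun s => s.2)).sum = ∑ j : Fin d, v j := by
  rw [← sum_coords]
  exact Finset.sum_congr rfl (fun j _ => hL.2 j)

lemma rookWalks_finite (d : ℕ) (v : Fin d → ℕ) : (RookWalks d v).Finite := by
  set N := ∑ j : Fin d, v j with hN
  have hsub : RookWalks d v ⊆ (fun l : List (Fin d × Fin (N+1)) =>
      l.map (fun s => (s.1, (s.2 : ℕ)))) '' {l | l.length ≤ N} := by
    intro L hL
    refine ⟨L.map (fun s => (s.1, ⟨min s.2 N, by omega⟩)), ?_, ?_⟩
    · simp only [Set.mem_setOf_eq, List.length_map]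
      calc L.length ≤ (L.map (fun s => s.2)).sum := length_le_of_pos L hL.1
        _ = N := walk_sum_eq hL
    · simp only [List.map_map]
      have : ∀ s ∈ L, min s.2 N = s.2 := by
        intro s hs
        have h1 : s.2 ≤ v s.1 := entry_le hL hs
        have h2 : v s.1 ≤ N := Finset.single_le_sum (f := v) (by simp) (Finset.mem_univ s.1)
        omega
      conv_rhs => rw [← List.map_id L]
      refine List.map_congr_left ?_
      intro s hs
      simp [this s hs]
  exact Set.Finite.subset (Set.Finite.image _ (List.finite_length_le _ N)) hsub

lemma rookWalks_zero (d : ℕ) : RookWalks d (fun _ => 0) = {[]} := by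
  ext L
  constructor
  · intro hL
    simp only [Set.mem_singleton_iff]
    by_contra hne
    obtain ⟨s, hs⟩ := List.exists_mem_of_ne_nil L hne
    have h1 : 0 < s.2 := hL.1 s hs
    have h2 : s.2 ≤ 0 := entry_le hL hs
    omega
  · rintro rfl
    exact ⟨by simp, by simp⟩

lemma rookWalkCount_zero (d : ℕ) : rookWalkCount d (fun _ => 0) = 1 := by
  rw [rookWalkCount, rookWalks_zero, Set.ncard_singleton]

lemma ncard_finset_biUnion {ι α : Type*} (T : Finset ι) (E : ι → Set α)
    (hfin : ∀ i ∈ T, (E i).Finite)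
    (hdisj : ∀ i ∈ T, ∀ j ∈ T, i ≠ j → Disjoint (E i) (E j)) :
    (⋃ i ∈ T, E i).ncard = ∑ i ∈ T, (E i).ncard := by
  classical
  induction T using Finset.induction with
  | empty => simp
  | @insert a T ha ih =>
    have hfa : (E a).Finite := hfin a (Finset.mem_insert_self _ _)
    have hfT : (⋃ i ∈ T, E i).Finite := by
      apply Set.Finite.biUnion T.finite_toSet
      exact fun i hi => hfin i (Finset.mem_insert_of_mem hi)
    have hd : Disjoint (E a) (⋃ i ∈ T, E i) := by
      rw [Set.disjoint_iUnion₂_right]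
      intro i hi
      exact hdisj a (Finset.mem_insert_self _ _) i (Finset.mem_insert_of_mem hi)
        (fun h => ha (h ▸ hi))
    rw [Finset.set_biUnion_insert, Set.ncard_union_eq hd hfa hfT, Finset.sum_insert ha,
      ih (fun i hi => hfin i (Finset.mem_insert_of_mem hi))
        (fun i hi j hj hij => hdisj i (Finset.mem_insert_of_mem hi) j
          (Finset.mem_insert_of_mem hj) hij)]

lemma rookWalks_decomp {d : ℕ} (v : Fin d → ℕ) (hv : v ≠ fun _ => 0) :
    RookWalks d v = ⋃ p ∈ Finset.univ.sigma (fun i : Fin d => Finset.Icc 1 (v i)),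
      (fun L => L ++ [(p.1, p.2)]) '' RookWalks d (fun j => v j - if p.1 = j then p.2 else 0) := by
  ext L
  simp only [Set.mem_iUnion, Finset.mem_sigma, Finset.mem_univ, Finset.mem_Icc, true_and,
    Set.mem_image, exists_prop]
  constructor
  · intro hL
    have hne : L ≠ [] := by
      rintro rfl
      apply hv
      funext j
      have := hL.2 j
      simpa using this.symm
    set p := L.getLast hne with hp
    have hsplit : L.dropLast ++ [p] = L := List.dropLast_append_getLast hne
    have hpmem : p ∈ L := List.getLast_mem hne
    have hsums : ∀ j : Fin d,
        (L.dropLast.map (fun s => if s.1 = j then s.2 else 0)).sum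
          + (if p.1 = j then p.2 else 0) = v j := by
      intro j
      have := hL.2 j
      rw [← hsplit] at this
      simpa using this
    have hk1 : 1 ≤ p.2 := hL.1 p hpmem
    have hk2 : p.2 ≤ v p.1 := by
      have := hsums p.1
      simp at this
      omega
    refine ⟨⟨p.1, p.2⟩, ⟨hk1, hk2⟩, L.dropLast, ⟨?_, ?_⟩, ?_⟩
    · intro s hs
      exact hL.1 s (by rw [← hsplit]; exact List.mem_append_left _ hs)
    · intro j
      have := hsums j
      rcases eq_or_ne p.1 j with h | h
      · simp only [if_pos h] at this ⊢; omega
      · simp only [if_neg h] at this ⊢; omega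
    · simpa using hsplit
  · rintro ⟨⟨i, k⟩, ⟨hk1, hk2⟩, M, hM, rfl⟩
    dsimp only at hk1 hk2 hM ⊢
    constructor
    · intro s hs
      rcases List.mem_append.mp hs with h | h
      · exact hM.1 s h
      · simp only [List.mem_singleton] at h
        subst h
        exact hk1
    · intro j
      have := hM.2 j
      simp only [List.map_append, List.sum_append, List.map_cons, List.map_nil,
        List.sum_cons, List.sum_nil, add_zero]
      rcases eq_or_ne i j with h | h
      · subst h
        simp at this ⊢
        omega
      · simp only [if_neg h] at this ⊢
        omega

lemma rookWalkCount_rec {d : ℕ} (v : Fin d → ℕ) (hv : v ≠ fun _ => 0) :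
    rookWalkCount d v = ∑ i : Fin d, ∑ k ∈ Finset.Icc 1 (v i),
      rookWalkCount d (fun j => v j - if i = j then k else 0) := by
  rw [rookWalkCount, rookWalks_decomp v hv, ncard_finset_biUnion]
  · rw [Finset.sum_sigma]
    refine Finset.sum_congr rfl (fun i _ => Finset.sum_congr rfl (fun k _ => ?_))
    exact Set.ncard_image_of_injective _ (List.append_left_injective _)
  · intro p _
    exact (rookWalks_finite _ _).image _
  · intro p _ q _ hpq
    rw [Set.disjoint_left]
    rintro L ⟨M, _, rfl⟩ ⟨M', _, hM'⟩
    apply hpq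
    have := congrArg List.reverse hM'
    simp only [List.reverse_append, List.reverse_cons, List.reverse_nil,
      List.nil_append, List.cons_append] at this
    obtain ⟨h1, -⟩ := List.cons.inj this
    obtain ⟨ha, hb⟩ := Prod.mk.injEq .. ▸ h1
    exact Sigma.ext (by simp [ha]) (by simp [hb])


noncomputable def hser (d : ℕ) (i : Fin d) : MvPowerSeries (Fin d) ℤ :=
  fun m => if m ≠ 0 ∧ m = Finsupp.single i (m i) then 1 else 0

lemma coeff_hser (d : ℕ) (i : Fin d) (m : Fin d →₀ ℕ) :
    coeff m (hser d i) = if m ≠ 0 ∧ m = Finsupp.single i (m i) then 1 else 0 := rfl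

lemma coeff_hser_mul (d : ℕ) (i : Fin d) (φ : MvPowerSeries (Fin d) ℤ) (n : Fin d →₀ ℕ) :
    coeff n (hser d i * φ)
      = ∑ k ∈ Finset.Icc 1 (n i), coeff (n - Finsupp.single i k) φ := by
  classical
  rw [coeff_mul]
  rw [← Finset.sum_filter_of_ne (p := fun p => p.1 ≠ 0 ∧ p.1 = Finsupp.single i (p.1 i))
    (fun p _ hp => by
      by_contra hc
      rw [coeff_hser, if_neg hc, zero_mul] at hp
      exact hp rfl)]
  refine Finset.sum_nbij' (fun p => p.1 i) (fun k => (Finsupp.single i k, n - Finsupp.single i k))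
    ?_ ?_ ?_ ?_ ?_
  · rintro ⟨a, b⟩ hp
    simp only [Finset.mem_filter, Finset.HasAntidiagonal.mem_antidiagonal] at hp
    obtain ⟨hab, hne, hsing⟩ := hp
    simp only [Finset.mem_Icc]
    constructor
    · rcases Nat.eq_zero_or_pos (a i) with h0 | h0
      · exact absurd (by rw [hsing, h0, Finsupp.single_zero]) hne
      · exact h0
    · have := congrArg (fun f : Fin d →₀ ℕ => f i) hab
      simp only [Finsupp.add_apply] at this
      omega
  · intro k hk
    simp only [Finset.mem_Icc] at hk
    have hle : Finsupp.single i k ≤ n := by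
      rw [Finsupp.single_le_iff]
      exact hk.2
    simp only [Finset.mem_filter, Finset.HasAntidiagonal.mem_antidiagonal]
    refine ⟨add_tsub_cancel_of_le hle, ?_, ?_⟩
    · simp only [ne_eq, Finsupp.single_eq_zero]
      omega
    · simp [Finsupp.single_eq_same]
  · rintro ⟨a, b⟩ hp
    simp only [Finset.mem_filter, Finset.HasAntidiagonal.mem_antidiagonal] at hp
    obtain ⟨hab, hne, hsing⟩ := hp
    have hb : b = n - a := by
      rw [← hab]; exact (add_tsub_cancel_left a b).symm
    simp only [Prod.mk.injEq]
    refine ⟨hsing.symm, ?_⟩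
    rw [hb]
    congr 1
    rw [← hsing]
  · intro k hk
    simp [Finsupp.single_eq_same]
  · rintro ⟨a, b⟩ hp
    simp only [Finset.mem_filter, Finset.HasAntidiagonal.mem_antidiagonal] at hp
    obtain ⟨hab, hne, hsing⟩ := hp
    rw [coeff_hser, if_pos ⟨hne, hsing⟩, one_mul]
    have hb : b = n - a := by
      rw [← hab]; exact (add_tsub_cancel_left a b).symm
    simp only
    rw [hb]
    congr 1
    rw [← hsing]

lemma one_sub_X_mul_hser (d : ℕ) (i : Fin d) :
    (1 - X i) * hser d i = (X i : MvPowerSeries (Fin d) ℤ) := by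
  classical
  ext n
  rw [sub_mul, one_mul, map_sub]
  have hX : (X i : MvPowerSeries (Fin d) ℤ) = monomial (Finsupp.single i 1) 1 := rfl
  rw [hX, coeff_monomial_mul, coeff_monomial]
  simp only [coeff_hser, one_mul]
  by_cases hA : n ≠ 0 ∧ n = Finsupp.single i (n i)
  · have hni : 1 ≤ n i := by
      rcases Nat.eq_zero_or_pos (n i) with h | h
      · exact absurd (by rw [hA.2, h, Finsupp.single_zero]) hA.1
      · exact h
    have hB : Finsupp.single i 1 ≤ n := Finsupp.single_le_iff.mpr hni
    have h1 : n - Finsupp.single i 1 = Finsupp.single i (n i - 1) := by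
      conv_lhs => rw [hA.2]
      rw [← Finsupp.single_tsub]
    rw [if_pos hA, if_pos hB, h1]
    rcases eq_or_lt_of_le hni with h2 | h2
    · have hD : n = Finsupp.single i 1 := by rw [hA.2, ← h2]
      rw [if_neg (by rw [← h2]; simp), if_pos hD]
      ring
    · have hD : n ≠ Finsupp.single i 1 := by
        intro h
        rw [h, Finsupp.single_eq_same] at h2
        omega
      rw [if_pos ⟨by simp only [ne_eq, Finsupp.single_eq_zero]; omega,
          by simp [Finsupp.single_eq_same]⟩, if_neg hD]
      ring
  · have hD : n ≠ Finsupp.single i 1 := by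
      intro h
      exact hA ⟨by rw [h]; simp [Finsupp.single_eq_zero],
        by rw [h, Finsupp.single_eq_same]⟩
    rw [if_neg hA, if_neg hD]
    by_cases hB : Finsupp.single i 1 ≤ n
    · rw [if_pos hB, if_neg ?_]
      · ring
      · rintro ⟨hC0, hCs⟩
        apply hA
        have hn : n = Finsupp.single i 1 + (n - Finsupp.single i 1) :=
          (add_tsub_cancel_of_le hB).symm
        constructor
        · intro h0
          rw [h0, Finsupp.single_le_iff] at hB
          simp at hB
        · conv_lhs => rw [hn, hCs]
          rw [← Finsupp.single_add]
          congr 1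
          rw [hn]
          simp [Finsupp.add_apply, Finsupp.single_eq_same]
    · rw [if_neg hB]
      ring

lemma hser_identity (d : ℕ) (F : MvPowerSeries (Fin d) ℤ)
    (hF : ∀ n : Fin d →₀ ℕ, coeff n F = (rookWalkCount d (fun i => n i) : ℤ)) :
    (1 - ∑ i : Fin d, hser d i) * F = 1 := by
  classical
  ext n
  rw [sub_mul, one_mul, Finset.sum_mul, map_sub, map_sum, coeff_one]
  simp only [coeff_hser_mul, hF]
  by_cases hn : n = 0
  · subst hn
    simp only [Finsupp.coe_zero, Pi.zero_apply, if_pos rfl]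
    rw [rookWalkCount_zero]
    simp
  · rw [if_neg hn]
    have hv : (fun j => n j) ≠ (fun _ => 0 : Fin d → ℕ) := by
      intro h
      apply hn
      ext j
      exact congrFun h j
    rw [rookWalkCount_rec _ hv]
    push_cast
    rw [sub_eq_zero]
    refine Finset.sum_congr rfl fun i _ => Finset.sum_congr rfl fun k _ => ?_
    norm_cast
    congr 1
    funext j
    rw [Finsupp.tsub_apply, Finsupp.single_apply]



/-- For every `d ≥ 1`, the generating function
`F(x₁,…,x_d) = ∑ a_d(n₁,…,n_d) x₁^{n₁}⋯x_d^{n_d}` of `d`-dimensional rook walk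
numbers satisfies
`(∏ᵢ(1-xᵢ) - ∑ᵢ xᵢ·∏_{j≠i}(1-xⱼ))·F = ∏ᵢ(1-xᵢ)`, i.e.
`F = 1/(1 - ∑ᵢ xᵢ/(1-xᵢ))`. -/
theorem rook_gf_general_dim (d : ℕ) (hd : 1 ≤ d)
    (F : MvPowerSeries (Fin d) ℤ)
    (hF : ∀ n : Fin d →₀ ℕ, MvPowerSeries.coeff n F =
      (rookWalkCount d (fun i => n i) : ℤ)) :
    (∏ i : Fin d, (1 - X i)
      - ∑ i : Fin d, X i * ∏ j ∈ Finset.univ \ {i}, (1 - X j)) * F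
      = ∏ i : Fin d, (1 - X i) := by
  set Q : MvPowerSeries (Fin d) ℤ := ∏ i : Fin d, (1 - X i) with hQ
  have hQh : ∀ i : Fin d, Q * hser d i
      = X i * ∏ j ∈ Finset.univ \ {i}, (1 - X j) := by
    intro i
    have h1 : Q = (1 - X i) * ∏ j ∈ Finset.univ \ {i}, (1 - X j) := by
      rw [Finset.sdiff_singleton_eq_erase, hQ]
      exact (Finset.mul_prod_erase Finset.univ _ (Finset.mem_univ i)).symm
    rw [h1, mul_comm (1 - X i), mul_assoc, one_sub_X_mul_hser, mul_comm]
  have hP : Q - ∑ i : Fin d, X i * ∏ j ∈ Finset.univ \ {i}, (1 - X j)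
      = Q * (1 - ∑ i : Fin d, hser d i) := by
    rw [mul_sub, mul_one, Finset.mul_sum]
    congr 1
    exact Finset.sum_congr rfl fun i _ => (hQh i).symm
  rw [hP, mul_assoc, hser_identity d F hF, mul_one]
end

section
/- Let D(x) = ∑_{n≥0} a(n,n) x^n be the diagonal generating function of the 2-dimensional rook walk numbers, viewed as a formal power series over ℚ. Then (1 − 10x + 9x²)·(2·D(x) − 1)² = (1 − x)² as formal power series; equivalently, D(x) = 1/2 + (1−x)/(2√(1−10x+9x²)). -/
open PowerSeries

namespace RookAux

/-! ### Polynomial preliminaries -/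

noncomputable def P : Polynomial ℚ := 2 + 5 * Polynomial.X + 2 * Polynomial.X ^ 2

noncomputable def u (n m : ℕ) : ℚ := (P ^ n).coeff m

noncomputable def t (n : ℕ) : ℚ := u n n

lemma coeff_mul_quad (q : Polynomial ℚ) (m : ℕ) :
    (P * q).coeff (m + 2) = 2 * q.coeff (m + 2) + 5 * q.coeff (m + 1) + 2 * q.coeff m := by
  have h : P * q = 2 * q + 5 * (Polynomial.X * q) + 2 * (Polynomial.X ^ 2 * q) := by
    rw [P]; ring
  rw [h]
  simp [Polynomial.coeff_add, Polynomial.coeff_X_mul, Polynomial.coeff_X_pow_mul]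

lemma coeff_mul_lin (a c : ℚ) (q : Polynomial ℚ) (m : ℕ) :
    ((Polynomial.C a + Polynomial.C c * Polynomial.X) * q).coeff (m + 1)
      = a * q.coeff (m + 1) + c * q.coeff m := by
  have h : (Polynomial.C a + Polynomial.C c * Polynomial.X) * q
      = Polynomial.C a * q + Polynomial.C c * (Polynomial.X * q) := by ring
  rw [h]; simp [Polynomial.coeff_X_mul]

lemma R1 (n m : ℕ) : u (n + 1) (m + 2) = 2 * u n (m + 2) + 5 * u n (m + 1) + 2 * u n m := by
  show (P ^ (n+1)).coeff (m+2) = _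
  rw [pow_succ, mul_comm, coeff_mul_quad]; rfl

lemma dP : Polynomial.derivative P = Polynomial.C 5 + Polynomial.C 4 * Polynomial.X := by
  rw [P]; simp [map_ofNat]; ring

lemma R2 (n m : ℕ) :
    ((m : ℚ) + 2) * u (n + 1) (m + 2) = ((n : ℚ) + 1) * (5 * u n (m + 1) + 4 * u n m) := by
  have h := Polynomial.coeff_derivative (P ^ (n+1)) (m+1)
  rw [Polynomial.derivative_pow, dP, Nat.add_sub_cancel, mul_assoc, mul_comm (P ^ n),
    Polynomial.coeff_C_mul, coeff_mul_lin] at h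
  push_cast at h
  show ((m:ℚ)+2) * (P ^ (n+1)).coeff (m+2)
      = ((n : ℚ) + 1) * (5 * (P ^ n).coeff (m+1) + 4 * (P^n).coeff m)
  have e : m + 1 + 1 = m + 2 := rfl
  rw [e] at h
  linear_combination -h

lemma star (n m : ℕ) :
    ((m : ℚ) + 2) * (2 * u n (m + 2) + 5 * u n (m + 1) + 2 * u n m)
      = ((n : ℚ) + 1) * (5 * u n (m + 1) + 4 * u n m) := by
  rw [← R1]; exact R2 n m

lemma hw (n : ℕ) : u (n + 1) (n + 2) = u (n + 1) n := by
  have h := star (n+1) n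
  push_cast at h
  have h2 : ((n:ℚ) + 2) ≠ 0 := by positivity
  have key : ((n:ℚ)+2) * (2 * u (n+1) (n+2)) = ((n:ℚ)+2) * (2 * u (n+1) n) := by
    linear_combination h
  have := mul_left_cancel₀ h2 key
  linarith

lemma E1 (n : ℕ) : t (n + 2) = 5 * t (n + 1) + 4 * u (n + 1) n := by
  have h := R1 (n+1) n
  have h2 := hw n
  show u (n+2) (n+2) = 5 * u (n+1) (n+1) + 4 * u (n+1) n
  rw [h, h2]
  ring_nf

lemma E2 (n : ℕ) :
    ((n : ℚ) + 4) * u (n + 3) (n + 2)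
      = (4 * n + 12) * t (n + 2) + (5 * n + 15) * u (n + 2) (n + 1) := by
  have h1 := R1 (n+2) n
  have h2 := star (n+2) n
  push_cast at h1 h2 ⊢
  show ((n:ℚ) + 4) * u (n+3) (n+2) = (4*n+12) * u (n+2) (n+2) + (5*n+15) * u (n+2) (n+1)
  linear_combination ((n:ℚ)+4) * h1 - h2

lemma t0 : t 0 = 1 := by simp [t, u]

lemma t1 : t 1 = 5 := by
  show (P^1).coeff 1 = 5
  rw [pow_one, P]
  simp

lemma t2 : t 2 = 33 := by
  show (P^2).coeff 2 = 33
  have hp : P^2 = 4 + 20*Polynomial.X + 33*Polynomial.X^2 + 20*Polynomial.X^3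
      + 4*Polynomial.X^4 := by rw [P]; ring
  rw [hp]
  simp [Polynomial.coeff_ofNat_mul, Polynomial.coeff_X_pow, Polynomial.coeff_X]

lemma t3 : t 3 = 245 := by
  show (P^3).coeff 3 = 245
  have hp : P^3 = 8 + 60*Polynomial.X + 174*Polynomial.X^2 + 245*Polynomial.X^3
      + 174*Polynomial.X^4 + 60*Polynomial.X^5 + 8*Polynomial.X^6 := by rw [P]; ring
  rw [hp]
  simp [Polynomial.coeff_ofNat_mul, Polynomial.coeff_X_pow, Polynomial.coeff_X]

lemma trec (n : ℕ) :
    ((n : ℚ) + 2) * t (n + 2) = (10 * n + 15) * t (n + 1) - 9 * ((n : ℚ) + 1) * t n := by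
  match n with
  | 0 => norm_num [t0, t1, t2]
  | 1 => norm_num [t1, t2, t3]
  | (k+2) =>
    have e1 := E1 (k+2)
    have e2 := E2 k
    have e3 := E1 (k+1)
    norm_num at e1 e2 e3 ⊢
    linear_combination ((k:ℚ)+4) * e1 + 4 * e2 - (5*(k:ℚ)+15) * e3

/-! ### The power series `T` -/

noncomputable def T : PowerSeries ℚ := PowerSeries.mk t

lemma coeff_T (n : ℕ) : (PowerSeries.coeff n) T = t n := PowerSeries.coeff_mk n t

lemma hODE :
    ((1 : ℚ⟦X⟧) - 10 * X + 9 * X ^ 2) * (d⁄dX ℚ T) = ((5 : ℚ⟦X⟧) - 9 * X) * T := by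
  set dT := d⁄dX ℚ T with hdT
  have hl : ((1 : ℚ⟦X⟧) - 10 * X + 9 * X ^ 2) * dT
      = dT - (PowerSeries.C 10) * (X * dT) + (PowerSeries.C 9) * (X * (X * dT)) := by
    rw [map_ofNat, map_ofNat]; ring
  have hr : ((5 : ℚ⟦X⟧) - 9 * X) * T
      = (PowerSeries.C 5) * T - (PowerSeries.C 9) * (X * T) := by
    rw [map_ofNat, map_ofNat]; ring
  rw [hl, hr]
  ext n
  have hc : ∀ k, (PowerSeries.coeff k) dT = t (k+1) * (k+1) := by
    intro k; rw [hdT, PowerSeries.coeff_derivative, coeff_T]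
  match n with
  | 0 =>
    simp only [map_add, map_sub, coeff_C_mul, coeff_zero_X_mul, hc, coeff_T]
    norm_num [t0, t1]
  | 1 =>
    simp only [map_add, map_sub, coeff_C_mul, coeff_succ_X_mul, coeff_zero_X_mul, hc, coeff_T]
    have h := trec 0
    norm_num at h ⊢
    linarith
  | (m+2) =>
    simp only [map_add, map_sub, coeff_C_mul, coeff_succ_X_mul, hc, coeff_T]
    have h := trec (m+1)
    push_cast at h ⊢
    ring_nf at h ⊢
    linarith

lemma key_alg : ((1 : ℚ⟦X⟧) - 10 * X + 9 * X ^ 2) * T ^ 2 = 1 := by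
  set A : ℚ⟦X⟧ := (1 : ℚ⟦X⟧) - 10 * X + 9 * X ^ 2 with hA
  apply PowerSeries.derivative.ext (R := ℚ)
  · have l1 : d⁄dX ℚ (A * T ^ 2) = A * (d⁄dX ℚ (T ^ 2)) + T ^ 2 * (d⁄dX ℚ A) := by
      rw [Derivation.leibniz, smul_eq_mul, smul_eq_mul]
    have l2 : d⁄dX ℚ (T ^ 2) = 2 * T * (d⁄dX ℚ T) := by
      rw [pow_two, Derivation.leibniz, smul_eq_mul]; ring
    have l3 : d⁄dX ℚ A = -10 + 18 * X := by
      have e : A = 1 - (10:ℚ) • (X : ℚ⟦X⟧) + (9:ℚ) • ((X : ℚ⟦X⟧) * X) := by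
        rw [hA, PowerSeries.smul_eq_C_mul, PowerSeries.smul_eq_C_mul, map_ofNat, map_ofNat]
        ring
      rw [e]
      simp only [map_add, map_sub, Derivation.map_one_eq_zero, Derivation.map_smul,
        Derivation.leibniz, PowerSeries.derivative_X, smul_eq_mul]
      rw [PowerSeries.smul_eq_C_mul, PowerSeries.smul_eq_C_mul, map_ofNat, map_ofNat]
      ring
    rw [l1, l2, l3, Derivation.map_one_eq_zero]
    have h := hODE
    rw [← hA] at h
    linear_combination (2 * T) * h
  · rw [map_mul, map_pow, map_one]
    have c1 : constantCoeff A = 1 := by rw [hA]; simp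
    have c2 : constantCoeff T = 1 := by
      rw [show T = PowerSeries.mk t from rfl, ← PowerSeries.coeff_zero_eq_constantCoeff,
        PowerSeries.coeff_mk, t0]
    rw [c1, c2]; norm_num

/-! ### The `b` family and `cq` -/

noncomputable def b (n m : ℕ) : ℚ :=
  ((2 + Polynomial.X : Polynomial ℚ) ^ n * (1 + 2 * Polynomial.X) ^ m).coeff m

lemma bid (n m : ℕ) : b (n + 1) (m + 1) = 2 * b n (m + 1) + 2 * b (n + 1) m - 3 * b n m := by
  set g : Polynomial ℚ := (2 + Polynomial.X) ^ n * (1 + 2 * Polynomial.X) ^ m with hg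
  have hA : (2 + Polynomial.X : Polynomial ℚ) ^ (n+1) * (1 + 2 * Polynomial.X) ^ (m+1)
      = 2 * ((2 + Polynomial.X) ^ n * (1 + 2 * Polynomial.X) ^ (m+1))
        + Polynomial.X * ((1 + 2 * Polynomial.X) * g) := by
    rw [hg]; ring
  have hB : (1 + 2 * Polynomial.X) * g = 2 * ((2 + Polynomial.X) * g) - 3 * g := by ring
  have hC : (2 + Polynomial.X : Polynomial ℚ) ^ (n+1) * (1 + 2 * Polynomial.X) ^ m
      = (2 + Polynomial.X) * g := by rw [hg]; ring
  show ((2 + Polynomial.X : Polynomial ℚ) ^ (n+1) * (1 + 2 * Polynomial.X) ^ (m+1)).coeff (m+1)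
      = 2 * b n (m+1) + 2 * b (n+1) m - 3 * b n m
  rw [hA, Polynomial.coeff_add, Polynomial.coeff_ofNat_mul, Polynomial.coeff_X_mul, hB,
    Polynomial.coeff_sub, Polynomial.coeff_ofNat_mul, Polynomial.coeff_ofNat_mul]
  have e2 : b (n+1) m = ((2 + Polynomial.X) * g).coeff m := by
    show ((2 + Polynomial.X : Polynomial ℚ) ^ (n+1) * (1 + 2 * Polynomial.X) ^ m).coeff m = _
    rw [hC]
  have e3 : b n m = g.coeff m := rfl
  have e4 : b n (m+1)
      = ((2 + Polynomial.X : Polynomial ℚ) ^ n * (1 + 2 * Polynomial.X) ^ (m+1)).coeff (m+1) := rfl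
  rw [e2, e3, e4]
  ring

lemma bn0 (n : ℕ) : b n 0 = 2 ^ n := by
  show (_ : Polynomial ℚ).coeff 0 = _
  rw [Polynomial.coeff_zero_eq_eval_zero]
  simp

lemma lead_pow (m : ℕ) : ((1 + 2 * Polynomial.X : Polynomial ℚ) ^ m).coeff m = 2 ^ m := by
  induction m with
  | zero => simp
  | succ k ih =>
    have e : (1 + 2 * Polynomial.X : Polynomial ℚ) ^ (k+1)
        = (1 + 2 * Polynomial.X) ^ k + 2 * (Polynomial.X * (1 + 2 * Polynomial.X) ^ k) := by ring
    rw [e, Polynomial.coeff_add, Polynomial.coeff_ofNat_mul, Polynomial.coeff_X_mul, ih]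
    have hdeg : ((1 + 2 * Polynomial.X : Polynomial ℚ) ^ k).coeff (k+1) = 0 := by
      apply Polynomial.coeff_eq_zero_of_natDegree_lt
      have : ((1 + 2 * Polynomial.X : Polynomial ℚ)).natDegree ≤ 1 := by
        apply le_trans (Polynomial.natDegree_add_le _ _)
        simp
      calc ((1 + 2 * Polynomial.X : Polynomial ℚ) ^ k).natDegree ≤ k * 1 := by
            apply le_trans (Polynomial.natDegree_pow_le)
            exact Nat.mul_le_mul_left k this
        _ < k + 1 := by omega
    rw [hdeg]
    ring

lemma b0 (m : ℕ) : b 0 m = 2 ^ m := by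
  show (_ : Polynomial ℚ).coeff m = _
  rw [pow_zero, one_mul, lead_pow]

lemma hPfact : (2 + Polynomial.X : Polynomial ℚ) * (1 + 2 * Polynomial.X) = P := by
  rw [P]; ring

lemma bdiag (k : ℕ) : b k k = t k := by
  show (_ : Polynomial ℚ).coeff k = (P ^ k).coeff k
  rw [← mul_pow, hPfact]

lemma boff1 (j : ℕ) : b (j + 2) (j + 1) = 2 * t (j + 1) + u (j + 1) j := by
  have e : (2 + Polynomial.X : Polynomial ℚ) ^ (j+2) * (1 + 2 * Polynomial.X) ^ (j+1)
      = 2 * P ^ (j+1) + Polynomial.X * P ^ (j+1) := by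
    calc (2 + Polynomial.X : Polynomial ℚ) ^ (j+2) * (1 + 2 * Polynomial.X) ^ (j+1)
        = (2 + Polynomial.X) * ((2 + Polynomial.X) * (1 + 2 * Polynomial.X)) ^ (j+1) := by
          rw [mul_pow]; ring
      _ = _ := by rw [hPfact]; ring
  show (_ : Polynomial ℚ).coeff (j+1) = _
  rw [e, Polynomial.coeff_add, Polynomial.coeff_ofNat_mul, Polynomial.coeff_X_mul]
  rfl

lemma boff2 (j : ℕ) : b (j + 1) (j + 2) = u (j + 1) (j + 2) + 2 * t (j + 1) := by
  have e : (2 + Polynomial.X : Polynomial ℚ) ^ (j+1) * (1 + 2 * Polynomial.X) ^ (j+2)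
      = P ^ (j+1) + 2 * (Polynomial.X * P ^ (j+1)) := by
    calc (2 + Polynomial.X : Polynomial ℚ) ^ (j+1) * (1 + 2 * Polynomial.X) ^ (j+2)
        = (1 + 2 * Polynomial.X) * ((2 + Polynomial.X) * (1 + 2 * Polynomial.X)) ^ (j+1) := by
          rw [mul_pow]; ring
      _ = _ := by rw [hPfact]; ring
  show (_ : Polynomial ℚ).coeff (j+2) = _
  rw [e, Polynomial.coeff_add, Polynomial.coeff_ofNat_mul, Polynomial.coeff_X_mul]
  rfl

noncomputable def cq : ℕ → ℕ → ℚ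
  | 0, 0 => 1
  | n + 1, 0 => 2 ^ n
  | 0, m + 1 => 2 ^ m
  | n + 1, m + 1 => b (n + 1) (m + 1) - b n (m + 1) - b (n + 1) m + b n m

lemma cq11 : cq 1 1 = 2 := by
  show b 1 1 - b 0 1 - b 1 0 + b 0 0 = 2
  rw [bdiag, t1, b0, bn0, bdiag, t0]
  norm_num

lemma cq_rec (n m : ℕ) (h : ¬(n = 0 ∧ m = 0)) :
    cq (n + 1) (m + 1) = 2 * cq n (m + 1) + 2 * cq (n + 1) m - 3 * cq n m := by
  match n, m with
  | 0, 0 => exact absurd ⟨rfl, rfl⟩ h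
  | k+1, j+1 =>
    show b (k+2) (j+2) - b (k+1) (j+2) - b (k+2) (j+1) + b (k+1) (j+1)
      = 2 * (b (k+1) (j+2) - b k (j+2) - b (k+1) (j+1) + b k (j+1))
      + 2 * (b (k+2) (j+1) - b (k+1) (j+1) - b (k+2) j + b (k+1) j)
      - 3 * (b (k+1) (j+1) - b k (j+1) - b (k+1) j + b k j)
    linear_combination bid (k+1) (j+1) - bid k (j+1) - bid (k+1) j + bid k j
  | 0, j+1 =>
    show b (0+1) (j+1+1) - b 0 (j+1+1) - b (0+1) (j+1) + b 0 (j+1)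
      = 2 * (2 ^ (j+1)) + 2 * (b (0+1) (j+1) - b 0 (j+1) - b (0+1) j + b 0 j) - 3 * 2 ^ j
    have h1 := bid 0 (j+1)
    have h2 := bid 0 j
    simp only [b0] at h1 h2 ⊢
    linear_combination h1 - h2
  | k+1, 0 =>
    show b (k+1+1) (0+1) - b (k+1) (0+1) - b (k+1+1) 0 + b (k+1) 0
      = 2 * (b (k+1) (0+1) - b k (0+1) - b (k+1) 0 + b k 0) + 2 * (2 ^ (k+1)) - 3 * 2 ^ k
    have h1 := bid (k+1) 0
    have h2 := bid k 0
    simp only [bn0] at h1 h2 ⊢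
    linear_combination h1 - h2

lemma cq_diag (k : ℕ) : 2 * cq (k + 1) (k + 1) = t (k + 1) - t k := by
  match k with
  | 0 =>
    rw [cq11, t1, t0]; norm_num
  | j+1 =>
    show 2 * (b (j+2) (j+2) - b (j+1) (j+2) - b (j+2) (j+1) + b (j+1) (j+1)) = _
    rw [bdiag, bdiag, boff1, boff2, hw]
    linear_combination E1 j

/-! ### Counting rook walks -/

lemma sum_coords {d : ℕ} (L : List (Fin d × ℕ)) :
    (∑ i : Fin d, (L.map (fun s => if s.1 = i then s.2 else 0)).sum) = (L.map Prod.snd).sum := by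
  induction L with
  | nil => simp
  | cons s L ih =>
    simp only [List.map_cons, List.sum_cons, Finset.sum_add_distrib, ih]
    congr 1
    simp [Finset.sum_ite_eq]

lemma finite_lists {β : Type*} (T : Set β) (hT : T.Finite) (N : ℕ) :
    {L : List β | L.length ≤ N ∧ ∀ s ∈ L, s ∈ T}.Finite := by
  induction N with
  | zero =>
    apply Set.Finite.subset (Set.finite_singleton [])
    rintro L ⟨h1, _⟩
    simp [List.length_eq_zero_iff.mp (Nat.le_zero.mp h1)]
  | succ N ih =>
    apply Set.Finite.subset
      (Set.Finite.insert [] (Set.Finite.image (fun p : β × List β => p.1 :: p.2) (hT.prod ih)))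
    rintro L ⟨h1, h2⟩
    match L with
    | [] => exact Set.mem_insert _ _
    | s :: L' =>
      apply Set.mem_insert_of_mem
      refine ⟨(s, L'), ⟨h2 s (by simp), ?_, ?_⟩, rfl⟩
      · show L'.length ≤ N
        simp at h1
        omega
      · show ∀ x ∈ L', x ∈ T
        exact fun x hx => h2 x (by simp [hx])

lemma walk_snd_sum {d : ℕ} {v : Fin d → ℕ} {L : List (Fin d × ℕ)} (hL : L ∈ RookWalks d v) :
    (L.map Prod.snd).sum = ∑ i, v i := by
  rw [← sum_coords]
  exact Finset.sum_congr rfl fun i _ => hL.2 i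

lemma walks_finite {d : ℕ} (v : Fin d → ℕ) : (RookWalks d v).Finite := by
  set N := ∑ i, v i with hN
  apply Set.Finite.subset (finite_lists ((Set.univ : Set (Fin d)) ×ˢ Set.Iic N)
    (Set.finite_univ.prod (Set.finite_Iic N)) N)
  intro L hL
  have hsum := walk_snd_sum hL
  constructor
  · have : (L.map Prod.snd).length ≤ (L.map Prod.snd).sum := by
      apply List.length_le_sum_of_one_le
      intro x hx
      obtain ⟨s, hs, rfl⟩ := List.mem_map.mp hx
      exact hL.1 s hs
    simpa [hsum] using this
  · intro s hs
    refine ⟨Set.mem_univ _, ?_⟩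
    have : s.2 ≤ (L.map Prod.snd).sum := by
      apply List.single_le_sum (fun x _ => Nat.zero_le x)
      exact List.mem_map.mpr ⟨s, hs, rfl⟩
    simpa [hsum] using this

lemma walks_zero {d : ℕ} (v : Fin d → ℕ) (hv : ∀ i, v i = 0) : RookWalks d v = {[]} := by
  ext L
  constructor
  · intro hL
    match L with
    | [] => rfl
    | s :: L' =>
      exfalso
      have h1 := hL.1 s (by simp)
      have h2 := hL.2 s.1
      rw [hv s.1] at h2
      simp at h2
      omega
  · rintro rfl
    exact ⟨by simp, fun i => by simp [hv i]⟩

lemma mem_W {n m : ℕ} {L : List (Fin 2 × ℕ)} :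
    L ∈ RookWalks 2 ![n, m] ↔ (∀ s ∈ L, 0 < s.2)
      ∧ (L.map (fun s => if s.1 = 0 then s.2 else 0)).sum = n
      ∧ (L.map (fun s => if s.1 = 1 then s.2 else 0)).sum = m := by
  constructor
  · intro hL
    refine ⟨hL.1, ?_, ?_⟩
    · simpa using hL.2 0
    · simpa using hL.2 1
  · rintro ⟨h1, h2, h3⟩
    refine ⟨h1, fun i => ?_⟩
    fin_cases i
    · simpa using h2
    · simpa using h3

lemma step_sum (i : Fin 2) (c : ℕ) (L : List (Fin 2 × ℕ)) (j : Fin 2) :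
    (List.map (fun s => if s.1 = j then s.2 else 0) ((i, c) :: L)).sum
      = (if i = j then c else 0) + (List.map (fun s => if s.1 = j then s.2 else 0) L).sum := rfl

lemma W_decomp (n m : ℕ) (h : ¬(n = 0 ∧ m = 0)) :
    RookWalks 2 ![n, m]
      = (⋃ k ∈ Finset.range n, (fun L => ((0 : Fin 2), n - k) :: L) '' RookWalks 2 ![k, m])
      ∪ (⋃ j ∈ Finset.range m, (fun L => ((1 : Fin 2), m - j) :: L) '' RookWalks 2 ![n, j]) := by
  ext L
  simp only [Set.mem_union, Set.mem_iUnion, Set.mem_image, Finset.mem_range, exists_prop]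
  constructor
  · intro hL
    rw [mem_W] at hL
    obtain ⟨hpos, h0, h1⟩ := hL
    match L with
    | [] => simp at h0 h1; exact absurd ⟨h0.symm, h1.symm⟩ h
    | ⟨i, c⟩ :: L' =>
      have hc : 0 < c := hpos (i, c) List.mem_cons_self
      have hi : i = 0 ∨ i = 1 := by
        rcases i with ⟨_ | _ | _, hh⟩
        · left; rfl
        · right; rfl
        · omega
      rcases hi with rfl | rfl
      · left
        rw [step_sum, if_pos rfl] at h0
        rw [step_sum, if_neg (by decide), zero_add] at h1
        refine ⟨(L'.map (fun s => if s.1 = 0 then s.2 else 0)).sum, by omega, L', ?_, ?_⟩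
        · rw [mem_W]
          exact ⟨fun x hx => hpos x (List.mem_cons_of_mem _ hx), rfl, h1⟩
        · have : n - (L'.map (fun s => if s.1 = 0 then s.2 else 0)).sum = c := by omega
          rw [this]
      · right
        rw [step_sum, if_neg (by decide), zero_add] at h0
        rw [step_sum, if_pos rfl] at h1
        refine ⟨(L'.map (fun s => if s.1 = 1 then s.2 else 0)).sum, by omega, L', ?_, ?_⟩
        · rw [mem_W]
          exact ⟨fun x hx => hpos x (List.mem_cons_of_mem _ hx), h0, rfl⟩
        · have : m - (L'.map (fun s => if s.1 = 1 then s.2 else 0)).sum = c := by omega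
          rw [this]
  · intro hL
    rcases hL with ⟨k, hk, L', hL', rfl⟩ | ⟨j, hj, L', hL', rfl⟩
    · rw [mem_W] at hL' ⊢
      refine ⟨?_, ?_, ?_⟩
      · rintro s hs
        rcases List.mem_cons.mp hs with rfl | hs'
        · simp; omega
        · exact hL'.1 s hs'
      · rw [step_sum, if_pos rfl, hL'.2.1]; omega
      · rw [step_sum, if_neg (by decide), zero_add, hL'.2.2]
    · rw [mem_W] at hL' ⊢
      refine ⟨?_, ?_, ?_⟩
      · rintro s hs
        rcases List.mem_cons.mp hs with rfl | hs'
        · simp; omega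
        · exact hL'.1 s hs'
      · rw [step_sum, if_neg (by decide), zero_add, hL'.2.1]
      · rw [step_sum, if_pos rfl, hL'.2.2]; omega

lemma ncard_biUnion {ι α : Type*} (s : Finset ι) (f : ι → Set α)
    (hfin : ∀ i ∈ s, (f i).Finite)
    (hdisj : ∀ i ∈ s, ∀ j ∈ s, i ≠ j → Disjoint (f i) (f j)) :
    (⋃ i ∈ s, f i).ncard = ∑ i ∈ s, (f i).ncard := by
  classical
  induction s using Finset.induction with
  | empty => simp
  | @insert a s ha ih =>
    rw [Finset.sum_insert ha, Finset.set_biUnion_insert]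
    rw [Set.ncard_union_eq ?disj ?f1 ?f2]
    · rw [ih (fun i hi => hfin i (Finset.mem_insert_of_mem hi))
        (fun i hi j hj hij => hdisj i (Finset.mem_insert_of_mem hi) j (Finset.mem_insert_of_mem hj) hij)]
    case disj =>
      rw [Set.disjoint_iUnion_right]
      intro i
      rw [Set.disjoint_iUnion_right]
      intro hi
      exact hdisj a (Finset.mem_insert_self a s) i (Finset.mem_insert_of_mem hi)
        (fun hcontra => ha (hcontra ▸ hi))
    case f1 => exact hfin a (Finset.mem_insert_self a s)
    case f2 =>
      apply Set.Finite.biUnion s.finite_toSet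
      intro i hi
      exact hfin i (Finset.mem_insert_of_mem hi)

noncomputable def a (n m : ℕ) : ℕ := rookWalkCount 2 ![n, m]

lemma a_rec (n m : ℕ) (h : ¬(n = 0 ∧ m = 0)) :
    a n m = (∑ k ∈ Finset.range n, a k m) + (∑ j ∈ Finset.range m, a n j) := by
  have hW := W_decomp n m h
  show (RookWalks 2 ![n, m]).ncard = _
  rw [hW]
  have hfinA : ∀ k ∈ Finset.range n,
      ((fun L => ((0 : Fin 2), n - k) :: L) '' RookWalks 2 ![k, m]).Finite :=
    fun k _ => (walks_finite _).image _
  have hfinB : ∀ j ∈ Finset.range m,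
      ((fun L => ((1 : Fin 2), m - j) :: L) '' RookWalks 2 ![n, j]).Finite :=
    fun j _ => (walks_finite _).image _
  have hA : (⋃ k ∈ Finset.range n,
      (fun L => ((0 : Fin 2), n - k) :: L) '' RookWalks 2 ![k, m]).Finite := by
    apply Set.Finite.biUnion (Finset.range n).finite_toSet hfinA
  have hB : (⋃ j ∈ Finset.range m,
      (fun L => ((1 : Fin 2), m - j) :: L) '' RookWalks 2 ![n, j]).Finite := by
    apply Set.Finite.biUnion (Finset.range m).finite_toSet hfinB
  rw [Set.ncard_union_eq ?dAB hA hB]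
  · rw [ncard_biUnion _ _ hfinA ?dA, ncard_biUnion _ _ hfinB ?dB]
    · congr 1
      · apply Finset.sum_congr rfl
        intro k _
        rw [Set.ncard_image_of_injective _ (List.cons_injective)]
        rfl
      · apply Finset.sum_congr rfl
        intro j _
        rw [Set.ncard_image_of_injective _ (List.cons_injective)]
        rfl
    case dA =>
      intro i hi j hj hij
      rw [Set.disjoint_left]
      rintro L ⟨L1, _, rfl⟩ ⟨L2, _, hL2⟩
      have := (List.cons.injEq _ _ _ _).mp hL2
      have h2 : n - j = n - i := congrArg Prod.snd this.1
      simp only [Finset.mem_range] at hi hj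
      omega
    case dB =>
      intro i hi j hj hij
      rw [Set.disjoint_left]
      rintro L ⟨L1, _, rfl⟩ ⟨L2, _, hL2⟩
      have := (List.cons.injEq _ _ _ _).mp hL2
      have h2 : m - j = m - i := congrArg Prod.snd this.1
      simp only [Finset.mem_range] at hi hj
      omega
  case dAB =>
    rw [Set.disjoint_left]
    rintro L hA hB
    simp only [Set.mem_iUnion, Set.mem_image, exists_prop] at hA hB
    obtain ⟨k, _, L1, _, rfl⟩ := hA
    obtain ⟨j, _, L2, _, hL2⟩ := hB
    have := (List.cons.injEq _ _ _ _).mp hL2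
    have h1 : (1 : Fin 2) = (0 : Fin 2) := congrArg Prod.fst this.1
    exact absurd h1 (by decide)

lemma a00 : a 0 0 = 1 := by
  show (RookWalks 2 ![0, 0]).ncard = 1
  rw [walks_zero _ (fun i => by fin_cases i <;> rfl)]
  simp

noncomputable def aq (n m : ℕ) : ℚ := (a n m : ℚ)

lemma aq_rec (n m : ℕ) (h : ¬(n = 0 ∧ m = 0)) :
    aq n m = (∑ k ∈ Finset.range n, aq k m) + (∑ j ∈ Finset.range m, aq n j) := by
  unfold aq
  rw [a_rec n m h]
  push_cast
  ring

lemma aq00 : aq 0 0 = 1 := by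
  unfold aq
  rw [a00]
  norm_num

lemma aq_local (n m : ℕ) (h : ¬(n = 0 ∧ m = 0)) :
    aq (n + 1) (m + 1) = 2 * aq n (m + 1) + 2 * aq (n + 1) m - 3 * aq n m := by
  have h1 := aq_rec (n+1) (m+1) (by omega)
  have h2 := aq_rec n (m+1) (by omega)
  have h3 := aq_rec (n+1) m (by omega)
  have h4 := aq_rec n m h
  rw [Finset.sum_range_succ, Finset.sum_range_succ] at h1
  rw [Finset.sum_range_succ] at h2
  rw [Finset.sum_range_succ] at h3
  linear_combination h1 - h2 - h3 + h4

lemma aqn0 (n : ℕ) : aq (n + 1) 0 = 2 ^ n := by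
  induction n with
  | zero =>
    have h := aq_rec 1 0 (by omega)
    simpa [aq00] using h
  | succ k ih =>
    have h1 := aq_rec (k+2) 0 (by omega)
    have h2 := aq_rec (k+1) 0 (by omega)
    rw [Finset.sum_range_succ] at h1
    simp only [Finset.range_zero, Finset.sum_empty, add_zero] at h1 h2
    rw [h1, ← h2, ih]
    ring

lemma aq0m (m : ℕ) : aq 0 (m + 1) = 2 ^ m := by
  induction m with
  | zero =>
    have h := aq_rec 0 1 (by omega)
    simpa [aq00] using h
  | succ k ih =>
    have h1 := aq_rec 0 (k+2) (by omega)
    have h2 := aq_rec 0 (k+1) (by omega)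
    rw [Finset.sum_range_succ] at h1
    simp only [Finset.range_zero, Finset.sum_empty, zero_add] at h1 h2
    rw [h1, ← h2, ih]
    ring

lemma aq11 : aq 1 1 = 2 := by
  have h := aq_rec 1 1 (by omega)
  simp only [Finset.range_one, Finset.sum_singleton] at h
  rw [h, aq0m 0, aqn0 0]
  norm_num

lemma a_eq_cq (n m : ℕ) : aq n m = cq n m := by
  suffices key : ∀ N n m, n + m = N → aq n m = cq n m from key (n+m) n m rfl
  intro N
  induction N using Nat.strong_induction_on with
  | _ N ih =>
    intro n m hnm
    match n, m with
    | 0, 0 => rw [aq00]; rfl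
    | k+1, 0 => rw [aqn0]; rfl
    | 0, j+1 => rw [aq0m]; rfl
    | k+1, j+1 =>
      by_cases hkj : k = 0 ∧ j = 0
      · obtain ⟨rfl, rfl⟩ := hkj
        rw [aq11, cq11]
      · rw [aq_local k j hkj, cq_rec k j hkj]
        rw [ih (k + (j+1)) (by omega) k (j+1) rfl,
            ih ((k+1) + j) (by omega) (k+1) j rfl,
            ih (k + j) (by omega) k j rfl]

lemma diag_val (k : ℕ) : 2 * aq (k + 1) (k + 1) = t (k + 1) - t k := by
  rw [a_eq_cq]; exact cq_diag k

lemma count_diag (n : ℕ) : rookWalkCount 2 (fun _ => n) = a n n := by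
  have : (fun _ : Fin 2 => n) = ![n, n] := by
    funext i; fin_cases i <;> rfl
  rw [this]; rfl

end RookAux

open RookAux

/-- The diagonal generating function `D(x) = ∑ a(n,n) xⁿ` of 2-dimensional rook
walk numbers satisfies `(1 - 10x + 9x²)·(2D - 1)² = (1-x)²`, i.e.
`D = 1/2 + (1-x)/(2√(1-10x+9x²))`. -/
theorem rook_diagonal_gf_two_dim
    (D : PowerSeries ℚ)
    (hD : ∀ n : ℕ, PowerSeries.coeff n D =
      (rookWalkCount 2 (fun _ => n) : ℚ)) :
    (1 - 10 * X + 9 * X ^ 2) * (2 * D - 1) ^ 2 = (1 - X) ^ 2 := by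
  have hDT : 2 * D - 1 = (1 - X) * T := by
    have e : (1 - X) * T = T - X * T := by ring
    rw [e]
    ext n
    rw [map_sub, map_sub]
    match n with
    | 0 =>
      rw [PowerSeries.coeff_zero_X_mul, coeff_T, t0]
      have h0 := hD 0
      have : rookWalkCount 2 (fun _ => 0) = 1 := by
        unfold rookWalkCount
        rw [walks_zero _ (fun _ => rfl)]
        simp
      rw [this] at h0
      have e2 : (2 : ℚ⟦X⟧) * D = PowerSeries.C 2 * D := by rw [map_ofNat]
      rw [e2, PowerSeries.coeff_C_mul, h0, PowerSeries.coeff_one]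
      norm_num
    | k+1 =>
      rw [PowerSeries.coeff_succ_X_mul, coeff_T, coeff_T]
      have h1 := hD (k+1)
      rw [count_diag] at h1
      have h2 := diag_val k
      have e2 : (2 : ℚ⟦X⟧) * D = PowerSeries.C 2 * D := by rw [map_ofNat]
      rw [e2, PowerSeries.coeff_C_mul, h1, PowerSeries.coeff_one]
      unfold aq at h2
      rw [if_neg (by omega)]
      linarith
  rw [hDT]
  have h := key_alg
  linear_combination ((1:ℚ⟦X⟧) - X)^2 * h
end

section
/- Fix d ≥ 2 and extend the rook walk counting function a_d to integer arguments by setting a_d(n_1,…,n_d) = 0 whenever some n_i < 0. Then for all n_1,…,n_{d-1} ≥ 0 and all n_d ≥ 1: n_d · a_d(n_1,…,n_{d-2},n_{d-1},n_d) = (n_{d-1} − 1)·a_d(n_1,…,n_{d-2},n_{d-1}−1,n_d−1) + (n_{d-1} + 1)·a_d(n_1,…,n_{d-2},n_{d-1}+1,n_d−1) + (2 − n_d)·a_d(n_1,…,n_{d-2},n_{d-1},n_d−2) + (2n_d − 2n_{d-1} − 2)·a_d(n_1,…,n_{d-2},n_{d-1},n_d−1), where the equation is understood in ℤ. -/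
/-- The rook walk counting function extended to integer arguments:
it is `0` whenever some coordinate is negative. -/
noncomputable def rookWalkCountZ (d : ℕ) (v : Fin d → ℤ) : ℕ :=
  if ∀ i, 0 ≤ v i then rookWalkCount d (fun i => (v i).toNat) else 0

open Finset Function in
def walksF (d : ℕ) (v : Fin d → ℕ) : Finset (List (Fin d × ℕ)) :=
  if v = 0 then {[]} else
    ((Finset.univ.sigma fun i : Fin d => Finset.range (v i)).attach).biUnion
      fun p => (walksF d (Function.update v p.1.1 p.1.2)).image
        (List.cons (p.1.1, v p.1.1 - p.1.2))
  termination_by ∑ j, v j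
  decreasing_by
    have hp := p.2
    simp only [Finset.mem_sigma, Finset.mem_univ, Finset.mem_range, true_and] at hp
    refine Finset.sum_lt_sum (fun j _ => ?_) ⟨p.1.1, Finset.mem_univ _, ?_⟩
    · rcases eq_or_ne j p.1.1 with rfl | h
      · simp [hp.le]
      · simp [Function.update_of_ne h]
    · simpa using hp

lemma sum_walksF {M : Type*} [AddCommMonoid M] (d : ℕ) (v : Fin d → ℕ) (hv : v ≠ 0)
    (w : List (Fin d × ℕ) → M) :
    ∑ L ∈ walksF d v, w L
      = ∑ i : Fin d, ∑ c ∈ Finset.range (v i),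
          ∑ L ∈ walksF d (Function.update v i c), w ((i, v i - c) :: L) := by
  rw [walksF, if_neg hv]
  rw [Finset.sum_biUnion]
  · rw [Finset.sum_attach _ (fun p : (_ : Fin d) × ℕ =>
      ∑ L ∈ (walksF d (Function.update v p.1 p.2)).image (List.cons (p.1, v p.1 - p.2)), w L)]
    rw [Finset.sum_sigma]
    refine Finset.sum_congr rfl fun i _ => Finset.sum_congr rfl fun c hc => ?_
    rw [Finset.sum_image]
    intro a _ b _ h
    exact List.tail_eq_of_cons_eq h
  · intro p _ q _ hpq
    simp only [Function.onFun]
    apply Finset.disjoint_left.mpr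
    intro L hL hL'
    simp only [Finset.mem_image] at hL hL'
    obtain ⟨a, _, rfl⟩ := hL
    obtain ⟨b, _, hb⟩ := hL'
    obtain ⟨hb1, -⟩ := List.cons_eq_cons.mp hb
    obtain ⟨⟨qi, qc⟩, hq2⟩ := q
    obtain ⟨⟨pi, pc⟩, hp2⟩ := p
    simp only [Finset.mem_sigma, Finset.mem_univ, Finset.mem_range, true_and] at hp2 hq2
    rw [Prod.mk.injEq] at hb1
    obtain ⟨h1, h2⟩ := hb1
    subst h1
    simp only at h2 hp2 hq2
    have : qc = pc := by omega
    subst this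
    exact hpq rfl

def bF (d : ℕ) (v : Fin d → ℕ) : ℕ := (walksF d v).card

def BF (d : ℕ) (v : Fin d → ℕ) : ℕ := ∑ L ∈ walksF d v, (L.length + 1)

lemma walksF_zero (d : ℕ) : walksF d 0 = {[]} := by rw [walksF, if_pos rfl]

lemma bF_rec (d : ℕ) (v : Fin d → ℕ) :
    bF d v = (if v = 0 then 1 else 0)
      + ∑ i : Fin d, ∑ c ∈ Finset.range (v i), bF d (Function.update v i c) := by
  rcases eq_or_ne v 0 with rfl | hv
  · simp [bF, walksF_zero]
  · have h := sum_walksF d v hv (fun _ => (1 : ℕ))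
    rw [bF, Finset.card_eq_sum_ones, h, if_neg hv, zero_add]
    exact Finset.sum_congr rfl fun i _ => Finset.sum_congr rfl fun c _ =>
      (Finset.card_eq_sum_ones _).symm

lemma BF_rec (d : ℕ) (v : Fin d → ℕ) :
    BF d v = (if v = 0 then 1 else 0)
      + ∑ i : Fin d, ∑ c ∈ Finset.range (v i),
          (BF d (Function.update v i c) + bF d (Function.update v i c)) := by
  rcases eq_or_ne v 0 with rfl | hv
  · simp [BF, walksF_zero]
  · have h := sum_walksF d v hv (fun L => L.length + 1)
    simp only [List.length_cons] at h
    rw [BF, h, if_neg hv, zero_add]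
    refine Finset.sum_congr rfl fun i _ => Finset.sum_congr rfl fun c _ => ?_
    rw [BF, bF, Finset.card_eq_sum_ones, ← Finset.sum_add_distrib]

lemma triangle (f : ℕ → ℕ) (N : ℕ) :
    ∑ b ∈ Finset.range N, (N - b) * f b
      = (∑ b ∈ Finset.range N, ∑ c ∈ Finset.range b, f c) + ∑ c ∈ Finset.range N, f c := by
  induction N with
  | zero => simp
  | succ N ih =>
    rw [Finset.sum_range_succ, Finset.sum_range_succ (f := fun b => ∑ c ∈ Finset.range b, f c),
      Finset.sum_range_succ (f := f)]
    have h1 : ∑ b ∈ Finset.range N, (N + 1 - b) * f b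
        = ∑ b ∈ Finset.range N, ((N - b) * f b + f b) := by
      refine Finset.sum_congr rfl fun b hb => ?_
      have := Finset.mem_range.mp hb
      have : N + 1 - b = (N - b) + 1 := by omega
      rw [this]; ring
    rw [h1, Finset.sum_add_distrib, ih]
    simp; ring

lemma pq (f : ℕ → ℕ) (N : ℕ) :
    ∑ c ∈ Finset.range N, ∑ b ∈ Finset.range c, (c - b) * f b
      = ∑ b ∈ Finset.range N, (N - b) * ∑ c ∈ Finset.range b, f c := by
  induction N with
  | zero => simp
  | succ N ih =>
    rw [Finset.sum_range_succ, ih]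
    have h1 : ∑ b ∈ Finset.range (N + 1), (N + 1 - b) * ∑ c ∈ Finset.range b, f c
        = (∑ b ∈ Finset.range N, (N - b) * ∑ c ∈ Finset.range b, f c)
          + ((∑ b ∈ Finset.range N, ∑ c ∈ Finset.range b, f c) + ∑ c ∈ Finset.range N, f c) := by
      rw [Finset.sum_range_succ]
      have h2 : ∑ b ∈ Finset.range N, (N + 1 - b) * ∑ c ∈ Finset.range b, f c
          = ∑ b ∈ Finset.range N, ((N - b) * (∑ c ∈ Finset.range b, f c)
              + ∑ c ∈ Finset.range b, f c) := by
        refine Finset.sum_congr rfl fun b hb => ?_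
        have := Finset.mem_range.mp hb
        have : N + 1 - b = (N - b) + 1 := by omega
        rw [this]; ring
      rw [h2, Finset.sum_add_distrib]
      simp; ring
    rw [h1, triangle]
    conv_lhs => rw [triangle f N]

lemma sum_update_lt {d : ℕ} (v : Fin d → ℕ) (i : Fin d) {c : ℕ} (h : c < v i) :
    ∑ j, Function.update v i c j < ∑ j, v j := by
  refine Finset.sum_lt_sum (fun j _ => ?_) ⟨i, Finset.mem_univ _, ?_⟩
  · rcases eq_or_ne j i with rfl | hne
    · simp [h.le]
    · simp [Function.update_of_ne hne]
  · simpa using h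

lemma keyK (d : ℕ) (N : ℕ) : ∀ (v : Fin d → ℕ), ∑ j, v j ≤ N → ∀ i : Fin d,
    v i * bF d v = ∑ b ∈ Finset.range (v i), (v i - b) * BF d (Function.update v i b) := by
  induction N with
  | zero =>
    intro v hv i
    have h1 : v i ≤ ∑ j, v j :=
      Finset.single_le_sum (fun _ _ => Nat.zero_le _) (Finset.mem_univ i)
    have : v i = 0 := by omega
    simp [this]
  | succ N ih =>
    intro v hv i
    rcases Nat.eq_zero_or_pos (v i) with h0 | hvi
    · simp [h0]
    have hvne : v ≠ 0 := by
      intro h; rw [h] at hvi; simp at hvi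
    have hupd : ∀ (j : Fin d) (c : ℕ), c < v j → ∑ k, Function.update v j c k ≤ N :=
      fun j c hc => Nat.lt_succ_iff.mp (lt_of_lt_of_le (sum_update_lt v j hc) hv)
    -- abbreviations
    have hsplit : ∀ (F : Fin d → ℕ),
        ∑ j : Fin d, F j = F i + ∑ j ∈ Finset.univ.erase i, F j :=
      fun F => (Finset.add_sum_erase _ F (Finset.mem_univ i)).symm
    -- the five canonical terms
    set T1 := ∑ c ∈ Finset.range (v i),
      (v i - c) * (if Function.update v i c = 0 then 1 else 0) with hT1
    set T2 := ∑ c ∈ Finset.range (v i),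
      (v i - c) * ∑ c' ∈ Finset.range c, bF d (Function.update v i c') with hT2
    set T3 := ∑ b ∈ Finset.range (v i),
      (v i - b) * ∑ c ∈ Finset.range b, BF d (Function.update v i c) with hT3
    set T4 := ∑ j ∈ Finset.univ.erase i, ∑ c ∈ Finset.range (v j), ∑ b ∈ Finset.range (v i),
      (v i - b) * BF d (Function.update (Function.update v j c) i b) with hT4
    set T5 := ∑ j ∈ Finset.univ.erase i, ∑ c ∈ Finset.range (v j), ∑ b ∈ Finset.range (v i),
      (v i - b) * bF d (Function.update (Function.update v j c) i b) with hT5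
    -- LHS = T1 + T2 + T3 + T4 + T5
    have eL : v i * bF d v = T1 + T2 + T3 + T4 + T5 := by
      have hL1 : v i * bF d v
          = ∑ j : Fin d, ∑ c ∈ Finset.range (v j), v i * bF d (Function.update v j c) := by
        rw [bF_rec d v, if_neg hvne, zero_add, Finset.mul_sum]
        exact Finset.sum_congr rfl fun j _ => Finset.mul_sum ..
      have hII : ∑ j ∈ Finset.univ.erase i, ∑ c ∈ Finset.range (v j),
            v i * bF d (Function.update v j c) = T4 := by
        refine Finset.sum_congr rfl fun j hj => Finset.sum_congr rfl fun c hc => ?_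
        have hji : j ≠ i := (Finset.mem_erase.mp hj).1
        have hvic : (Function.update v j c) i = v i := Function.update_of_ne hji.symm _ _
        have h := ih (Function.update v j c) (hupd j c (Finset.mem_range.mp hc)) i
        rw [hvic] at h
        exact h
      have hI1 : ∀ c ∈ Finset.range (v i), v i * bF d (Function.update v i c)
          = (v i - c) * bF d (Function.update v i c)
            + ∑ b ∈ Finset.range c, (c - b) * BF d (Function.update v i b) := by
        intro c hc
        have hc' := Finset.mem_range.mp hc
        have e1 : c * bF d (Function.update v i c)
            = ∑ b ∈ Finset.range c, (c - b) * BF d (Function.update v i b) := by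
          have h := ih (Function.update v i c) (hupd i c hc') i
          rw [Function.update_self] at h
          simpa [Function.update_idem] using h
        calc v i * bF d (Function.update v i c)
            = (v i - c) * bF d (Function.update v i c)
              + c * bF d (Function.update v i c) := by
              rw [← add_mul]; congr 1; omega
          _ = _ := by rw [e1]
      have hI3 : ∀ c ∈ Finset.range (v i), (v i - c) * bF d (Function.update v i c)
          = (v i - c) * (if Function.update v i c = 0 then 1 else 0)
            + (v i - c) * ∑ c' ∈ Finset.range c, bF d (Function.update v i c')
            + ∑ j ∈ Finset.univ.erase i, ∑ c' ∈ Finset.range (v j),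
                (v i - c) * bF d (Function.update (Function.update v i c) j c') := by
        intro c hc
        rw [bF_rec d (Function.update v i c)]
        rw [hsplit (fun j => ∑ c' ∈ Finset.range ((Function.update v i c) j),
              bF d (Function.update (Function.update v i c) j c'))]
        have e2 : ∑ c' ∈ Finset.range ((Function.update v i c) i),
              bF d (Function.update (Function.update v i c) i c')
            = ∑ c' ∈ Finset.range c, bF d (Function.update v i c') := by
          simp [Function.update_idem]
        have e3 : ∑ j ∈ Finset.univ.erase i, ∑ c' ∈ Finset.range ((Function.update v i c) j),
              bF d (Function.update (Function.update v i c) j c')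
            = ∑ j ∈ Finset.univ.erase i, ∑ c' ∈ Finset.range (v j),
              bF d (Function.update (Function.update v i c) j c') := by
          refine Finset.sum_congr rfl fun j hj => ?_
          rw [Function.update_of_ne (Finset.mem_erase.mp hj).1]
        rw [e2, e3]
        simp only [mul_add, Finset.mul_sum]
        ring
      have hX5 : ∑ c ∈ Finset.range (v i), ∑ j ∈ Finset.univ.erase i,
            ∑ c' ∈ Finset.range (v j),
              (v i - c) * bF d (Function.update (Function.update v i c) j c') = T5 := by
        rw [Finset.sum_comm]
        refine Finset.sum_congr rfl fun j hj => ?_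
        have hij : i ≠ j := ((Finset.mem_erase.mp hj).1).symm
        rw [Finset.sum_comm]
        refine Finset.sum_congr rfl fun c' _ => Finset.sum_congr rfl fun c _ => ?_
        rw [Function.update_comm hij]
      calc v i * bF d v
          = ∑ j : Fin d, ∑ c ∈ Finset.range (v j), v i * bF d (Function.update v j c) := hL1
        _ = (∑ c ∈ Finset.range (v i), v i * bF d (Function.update v i c))
            + ∑ j ∈ Finset.univ.erase i, ∑ c ∈ Finset.range (v j),
                v i * bF d (Function.update v j c) :=
            hsplit _
        _ = (∑ c ∈ Finset.range (v i),
              ((v i - c) * bF d (Function.update v i c)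
                + ∑ b ∈ Finset.range c, (c - b) * BF d (Function.update v i b))) + T4 := by
            rw [Finset.sum_congr rfl hI1, hII]
        _ = (∑ c ∈ Finset.range (v i), (v i - c) * bF d (Function.update v i c)) + T3 + T4 := by
            rw [Finset.sum_add_distrib, pq (fun b => BF d (Function.update v i b)) (v i), add_assoc]
        _ = (T1 + T2 + ∑ c ∈ Finset.range (v i), ∑ j ∈ Finset.univ.erase i,
              ∑ c' ∈ Finset.range (v j),
                (v i - c) * bF d (Function.update (Function.update v i c) j c')) + T3 + T4 := by
            rw [Finset.sum_congr rfl hI3, Finset.sum_add_distrib, Finset.sum_add_distrib]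
        _ = T1 + T2 + T3 + T4 + T5 := by rw [hX5]; ring
    -- RHS = T1 + T2 + T3 + T4 + T5
    have eR : ∑ b ∈ Finset.range (v i), (v i - b) * BF d (Function.update v i b)
        = T1 + T2 + T3 + T4 + T5 := by
      have hR1 : ∀ b ∈ Finset.range (v i), (v i - b) * BF d (Function.update v i b)
          = (v i - b) * (if Function.update v i b = 0 then 1 else 0)
            + ((v i - b) * ∑ c ∈ Finset.range b, BF d (Function.update v i c)
              + (v i - b) * ∑ c ∈ Finset.range b, bF d (Function.update v i c))
            + ∑ j ∈ Finset.univ.erase i, ∑ c ∈ Finset.range (v j),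
                ((v i - b) * BF d (Function.update (Function.update v i b) j c)
                  + (v i - b) * bF d (Function.update (Function.update v i b) j c)) := by
        intro b hb
        rw [BF_rec d (Function.update v i b)]
        rw [hsplit (fun j => ∑ c ∈ Finset.range ((Function.update v i b) j),
              (BF d (Function.update (Function.update v i b) j c)
                + bF d (Function.update (Function.update v i b) j c)))]
        have e2 : ∑ c ∈ Finset.range ((Function.update v i b) i),
              (BF d (Function.update (Function.update v i b) i c)
                + bF d (Function.update (Function.update v i b) i c))
            = ∑ c ∈ Finset.range b, (BF d (Function.update v i c) + bF d (Function.update v i c)) := by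
          simp [Function.update_idem]
        have e3 : ∑ j ∈ Finset.univ.erase i, ∑ c ∈ Finset.range ((Function.update v i b) j),
              (BF d (Function.update (Function.update v i b) j c)
                + bF d (Function.update (Function.update v i b) j c))
            = ∑ j ∈ Finset.univ.erase i, ∑ c ∈ Finset.range (v j),
              (BF d (Function.update (Function.update v i b) j c)
                + bF d (Function.update (Function.update v i b) j c)) := by
          refine Finset.sum_congr rfl fun j hj => ?_
          rw [Function.update_of_ne (Finset.mem_erase.mp hj).1]
        rw [e2, e3]
        simp only [mul_add, Finset.mul_sum, Finset.sum_add_distrib]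
        ring
      have hX45 : ∑ b ∈ Finset.range (v i), ∑ j ∈ Finset.univ.erase i,
            ∑ c ∈ Finset.range (v j),
              ((v i - b) * BF d (Function.update (Function.update v i b) j c)
                + (v i - b) * bF d (Function.update (Function.update v i b) j c)) = T4 + T5 := by
        rw [Finset.sum_comm, ← Finset.sum_add_distrib]
        refine Finset.sum_congr rfl fun j hj => ?_
        have hij : i ≠ j := ((Finset.mem_erase.mp hj).1).symm
        rw [Finset.sum_comm, ← Finset.sum_add_distrib]
        refine Finset.sum_congr rfl fun c _ => ?_
        rw [← Finset.sum_add_distrib]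
        refine Finset.sum_congr rfl fun b _ => ?_
        rw [Function.update_comm hij]
      calc ∑ b ∈ Finset.range (v i), (v i - b) * BF d (Function.update v i b)
          = T1 + ((T3 + T2) + (T4 + T5)) := by
            rw [Finset.sum_congr rfl hR1, Finset.sum_add_distrib, Finset.sum_add_distrib,
              Finset.sum_add_distrib, hX45, ← hT1, ← hT3, ← hT2]
            ring
        _ = T1 + T2 + T3 + T4 + T5 := by ring
    rw [eL, eR]

lemma keyL (d : ℕ) (v : Fin d → ℕ) (i : Fin d) :
    (v i + 1) * bF d (Function.update v i (v i + 1))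
      + (v i - 1) * bF d (Function.update v i (v i - 1))
    = 2 * (v i) * bF d v + BF d v := by
  have K' : ∀ k : ℕ, k * bF d (Function.update v i k)
      = ∑ b ∈ Finset.range k, (k - b) * BF d (Function.update v i b) := by
    intro k
    have h := keyK d (∑ j, Function.update v i k j) (Function.update v i k) le_rfl i
    simpa [Function.update_idem] using h
  have Sstep : ∀ k : ℕ, ∑ b ∈ Finset.range (k+1), ((k+1) - b) * BF d (Function.update v i b)
      = (∑ b ∈ Finset.range k, (k - b) * BF d (Function.update v i b))
        + ∑ b ∈ Finset.range (k+1), BF d (Function.update v i b) := by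
    intro k
    rw [Finset.sum_range_succ, Finset.sum_range_succ (f := fun b => BF d (Function.update v i b))]
    have h : ∀ b ∈ Finset.range k, ((k+1) - b) * BF d (Function.update v i b)
        = (k - b) * BF d (Function.update v i b) + BF d (Function.update v i b) := by
      intro b hb
      have := Finset.mem_range.mp hb
      have e : (k+1) - b = (k - b) + 1 := by omega
      rw [e]; ring
    rw [Finset.sum_congr rfl h, Finset.sum_add_distrib]
    simp
    ring
  cases hvi : v i with
  | zero =>
    have hv : Function.update v i 0 = v := by
      rw [← hvi]; exact Function.update_eq_self i v
    have h1 := K' 1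
    simp only [Finset.range_one, Finset.sum_singleton, Nat.sub_zero, one_mul, hv] at h1
    simpa [hv] using h1
  | succ k =>
    have hv : Function.update v i (k+1) = v := by
      rw [← hvi]; exact Function.update_eq_self i v
    have e3 := K' (k+2)
    have e5 := K' k
    have e4 := K' (k+1)
    rw [hv] at e4
    have s1 := Sstep (k+1)
    have s2 := Sstep k
    have t1 := Finset.sum_range_succ (fun b => BF d (Function.update v i b)) (k+1)
    rw [hv] at t1
    have hBv : BF d (Function.update v i (k+1)) = BF d v := by rw [hv]
    -- goal: (k+2)*bF(upd (k+2)) + k*bF(upd k) = 2*(k+1)*bF v + BF v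
    show (k+1+1) * bF d (Function.update v i (k+1+1))
        + (k+1-1) * bF d (Function.update v i (k+1-1)) = 2*(k+1) * bF d v + BF d v
    have hk1 : k+1-1 = k := by omega
    have hk2 : k+1+1 = k+2 := by omega
    rw [hk1, hk2]
    have h2 : 2*(k+1) * bF d v = (∑ b ∈ Finset.range (k+1), ((k+1) - b) * BF d (Function.update v i b))
        + ∑ b ∈ Finset.range (k+1), ((k+1) - b) * BF d (Function.update v i b) := by
      have : 2*(k+1) * bF d v = (k+1) * bF d v + (k+1) * bF d v := by ring
      rw [this, e4]
    rw [e3, e5, h2]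
    linarith [s1, s2, t1]

lemma rookWalks_zero_s7 (d : ℕ) : RookWalks d 0 = {([] : List (Fin d × ℕ))} := by
  ext L
  constructor
  · rintro ⟨hpos, hsum⟩
    cases L with
    | nil => rfl
    | cons s L' =>
      exfalso
      have h := hsum s.1
      simp at h
      have := hpos s (by simp)
      omega
  · rintro rfl
    exact ⟨by simp, by simp⟩

lemma rookWalks_cons (d : ℕ) (v : Fin d → ℕ) (hv : v ≠ 0) (L : List (Fin d × ℕ)) :
    L ∈ RookWalks d v ↔ ∃ (i : Fin d) (c : ℕ), c < v i ∧ ∃ L',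
      L' ∈ RookWalks d (Function.update v i c) ∧ L = (i, v i - c) :: L' := by
  constructor
  · rintro ⟨hpos, hsum⟩
    cases L with
    | nil =>
      exfalso
      apply hv
      funext j
      have := hsum j
      simpa using this.symm
    | cons s L' =>
      obtain ⟨i, a⟩ := s
      have ha : 0 < a := hpos (i, a) (by simp)
      have hi := hsum i
      simp at hi
      have hle : a ≤ v i := by omega
      refine ⟨i, v i - a, by omega, L', ⟨fun s hs => hpos s (by simp [hs]), fun j => ?_⟩, by
        congr 2; omega⟩
      have hj := hsum j
      simp only [List.map_cons, List.sum_cons] at hj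
      rcases eq_or_ne j i with rfl | hne
      · rw [Function.update_self]
        simp at hj
        omega
      · rw [Function.update_of_ne hne]
        rw [if_neg (by simpa using hne.symm)] at hj
        omega
  · rintro ⟨i, c, hc, L', ⟨hpos, hsum⟩, rfl⟩
    constructor
    · rintro s hs
      rcases List.mem_cons.mp hs with rfl | hs'
      · simp; omega
      · exact hpos s hs'
    · intro j
      have hj := hsum j
      simp only [List.map_cons, List.sum_cons]
      rcases eq_or_ne j i with rfl | hne
      · rw [Function.update_self] at hj
        rw [if_pos rfl]
        omega
      · rw [Function.update_of_ne hne] at hj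
        rw [if_neg (by simpa using hne.symm)]
        omega

lemma rookWalks_eq_walksF (d : ℕ) (N : ℕ) : ∀ v : Fin d → ℕ, ∑ j, v j ≤ N →
    RookWalks d v = ↑(walksF d v) := by
  induction N with
  | zero =>
    intro v hv
    have hv0 : v = 0 := by
      funext j
      have h1 : v j ≤ ∑ k, v k :=
        Finset.single_le_sum (fun _ _ => Nat.zero_le _) (Finset.mem_univ j)
      simp only [Pi.zero_apply]; omega
    subst hv0
    rw [rookWalks_zero_s7, walksF_zero]
    simp
  | succ N ih =>
    intro v hv
    rcases eq_or_ne v 0 with rfl | hvne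
    · rw [rookWalks_zero_s7, walksF_zero]; simp
    ext L
    rw [rookWalks_cons d v hvne]
    rw [Finset.mem_coe, walksF, if_neg hvne, Finset.mem_biUnion]
    constructor
    · rintro ⟨i, c, hc, L', hL', rfl⟩
      refine ⟨⟨⟨i, c⟩, by simp [hc]⟩, Finset.mem_attach _ _, ?_⟩
      rw [Finset.mem_image]
      refine ⟨L', ?_, rfl⟩
      have := ih (Function.update v i c)
        (Nat.lt_succ_iff.mp (lt_of_lt_of_le (sum_update_lt v i hc) hv))
      rw [this] at hL'
      exact hL'
    · rintro ⟨⟨⟨i, c⟩, hp⟩, -, hL⟩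
      rw [Finset.mem_image] at hL
      obtain ⟨L', hL', rfl⟩ := hL
      simp only [Finset.mem_sigma, Finset.mem_univ, Finset.mem_range, true_and] at hp
      refine ⟨i, c, hp, L', ?_, rfl⟩
      rw [ih (Function.update v i c)
        (Nat.lt_succ_iff.mp (lt_of_lt_of_le (sum_update_lt v i hp) hv))]
      exact hL'

lemma rookWalkCount_eq_bF (d : ℕ) (v : Fin d → ℕ) : rookWalkCount d v = bF d v := by
  rw [rookWalkCount, rookWalks_eq_walksF d (∑ j, v j) v le_rfl, Set.ncard_coe_finset, bF]

lemma toNat_update (d : ℕ) (v : Fin d → ℤ) (i : Fin d) (x : ℤ) :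
    (fun j => ((Function.update v i x) j).toNat)
      = Function.update (fun j => (v j).toNat) i x.toNat := by
  funext j
  simp [Function.update_apply, apply_ite Int.toNat]

lemma main_aux (d : ℕ) (v : Fin d → ℤ) (hpos : ∀ i, 0 ≤ v i) (i0 i1 : Fin d)
    (hne : i0 ≠ i1) (hlast : 1 ≤ v i1) :
    v i1 * (rookWalkCountZ d v : ℤ)
      = (v i0 - 1) * (rookWalkCountZ d (Function.update
            (Function.update v i0 (v i0 - 1)) i1 (v i1 - 1)) : ℤ)
      + (v i0 + 1) * (rookWalkCountZ d (Function.update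
            (Function.update v i0 (v i0 + 1)) i1 (v i1 - 1)) : ℤ)
      + (2 - v i1) * (rookWalkCountZ d (Function.update v i1 (v i1 - 2)) : ℤ)
      + (2 * v i1 - 2 * v i0 - 2) *
          (rookWalkCountZ d (Function.update v i1 (v i1 - 1)) : ℤ) := by
  classical
  set vN : Fin d → ℕ := fun j => (v j).toNat with hvN
  have hcast : ∀ j, (vN j : ℤ) = v j := fun j => Int.toNat_of_nonneg (hpos j)
  set m := vN i0 with hm
  set n := vN i1 with hn
  have hn1 : 1 ≤ n := by have := hcast i1; omega
  set v' := Function.update vN i1 (n - 1) with hv'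
  have hv'i1 : v' i1 = n - 1 := Function.update_self ..
  have hv'i0 : v' i0 = m := Function.update_of_ne hne ..
  have ev : ∀ (w : Fin d → ℤ) (wN : Fin d → ℕ), (∀ j, (wN j : ℤ) = w j) →
      (fun j => (w j).toNat) = wN := by
    intro w wN h
    funext j
    have := h j
    omega
  -- conversion of the five counts
  have c0 : rookWalkCountZ d v = bF d vN := by
    rw [rookWalkCountZ, if_pos hpos, rookWalkCount_eq_bF]
  have c4 : rookWalkCountZ d (Function.update v i1 (v i1 - 1)) = bF d v' := by
    rw [rookWalkCountZ, if_pos, rookWalkCount_eq_bF]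
    · congr 1
      refine ev _ _ fun j => ?_
      rw [hv']
      rcases eq_or_ne j i1 with rfl | h1
      · rw [Function.update_self, Function.update_self]
        have := hcast j; omega
      · rw [Function.update_of_ne h1, Function.update_of_ne h1]
        exact hcast j
    · intro j
      rcases eq_or_ne j i1 with rfl | h1
      · rw [Function.update_self]; have := hcast j; omega
      · rw [Function.update_of_ne h1]; exact hpos j
  have A3 : (2 - v i1) * (rookWalkCountZ d (Function.update v i1 (v i1 - 2)) : ℤ)
      = -(((n - 2 : ℕ) : ℤ) * (bF d (Function.update vN i1 (n - 2)) : ℤ)) := by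
    rcases le_or_gt 2 n with h2 | h2
    · have hnn : ∀ j, 0 ≤ (Function.update v i1 (v i1 - 2)) j := by
        intro j
        rcases eq_or_ne j i1 with rfl | h1
        · rw [Function.update_self]; have := hcast j; omega
        · rw [Function.update_of_ne h1]; exact hpos j
      rw [rookWalkCountZ, if_pos hnn, rookWalkCount_eq_bF]
      have e : (fun j => ((Function.update v i1 (v i1 - 2)) j).toNat)
          = Function.update vN i1 (n - 2) := by
        refine ev _ _ fun j => ?_
        rcases eq_or_ne j i1 with rfl | h1
        · rw [Function.update_self, Function.update_self]
          have := hcast j; omega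
        · rw [Function.update_of_ne h1, Function.update_of_ne h1]
          exact hcast j
      rw [e]
      have hco : (2 : ℤ) - v i1 = -((n - 2 : ℕ) : ℤ) := by have := hcast i1; omega
      rw [hco]; ring
    · have hneg : ¬ (∀ j, 0 ≤ (Function.update v i1 (v i1 - 2)) j) := by
        push_neg
        exact ⟨i1, by rw [Function.update_self]; have := hcast i1; omega⟩
      rw [rookWalkCountZ, if_neg hneg]
      have hz : ((n - 2 : ℕ) : ℤ) = 0 := by omega
      rw [hz]
      simp
  have A1 : (v i0 - 1) * (rookWalkCountZ d (Function.update
        (Function.update v i0 (v i0 - 1)) i1 (v i1 - 1)) : ℤ)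
      = ((m - 1 : ℕ) : ℤ) * (bF d (Function.update v' i0 (m - 1)) : ℤ) := by
    rcases Nat.eq_zero_or_pos m with h0 | h1
    · have hneg : ¬ (∀ j, 0 ≤ (Function.update
          (Function.update v i0 (v i0 - 1)) i1 (v i1 - 1)) j) := by
        push_neg
        refine ⟨i0, ?_⟩
        rw [Function.update_of_ne hne, Function.update_self]
        have := hcast i0; omega
      rw [rookWalkCountZ, if_neg hneg]
      have hz : ((m - 1 : ℕ) : ℤ) = 0 := by omega
      rw [hz]
      simp
    · have hnn : ∀ j, 0 ≤ (Function.update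
          (Function.update v i0 (v i0 - 1)) i1 (v i1 - 1)) j := by
        intro j
        rcases eq_or_ne j i1 with rfl | hne1
        · rw [Function.update_self]; have := hcast j; omega
        rw [Function.update_of_ne hne1]
        rcases eq_or_ne j i0 with rfl | hne0
        · rw [Function.update_self]; have := hcast j; omega
        · rw [Function.update_of_ne hne0]; exact hpos j
      rw [rookWalkCountZ, if_pos hnn, rookWalkCount_eq_bF]
      have e : (fun j => ((Function.update (Function.update v i0 (v i0 - 1)) i1 (v i1 - 1)) j).toNat)
          = Function.update v' i0 (m - 1) := by
        refine ev _ _ fun j => ?_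
        rw [hv']
        rcases eq_or_ne j i0 with rfl | hne0
        · rw [Function.update_self, Function.update_of_ne hne, Function.update_self]
          have := hcast j; omega
        rw [Function.update_of_ne hne0]
        rcases eq_or_ne j i1 with rfl | hne1
        · rw [Function.update_self, Function.update_self]
          have := hcast j; omega
        · rw [Function.update_of_ne hne1, Function.update_of_ne hne1,
            Function.update_of_ne hne0]
          exact hcast j
      rw [e]
      have hco : v i0 - 1 = ((m - 1 : ℕ) : ℤ) := by have := hcast i0; omega
      rw [hco]
  have A2 : (v i0 + 1) * (rookWalkCountZ d (Function.update
        (Function.update v i0 (v i0 + 1)) i1 (v i1 - 1)) : ℤ)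
      = ((m + 1 : ℕ) : ℤ) * (bF d (Function.update v' i0 (m + 1)) : ℤ) := by
    have hnn : ∀ j, 0 ≤ (Function.update
        (Function.update v i0 (v i0 + 1)) i1 (v i1 - 1)) j := by
      intro j
      rcases eq_or_ne j i1 with rfl | hne1
      · rw [Function.update_self]; have := hcast j; omega
      rw [Function.update_of_ne hne1]
      rcases eq_or_ne j i0 with rfl | hne0
      · rw [Function.update_self]; have := hcast j; omega
      · rw [Function.update_of_ne hne0]; exact hpos j
    rw [rookWalkCountZ, if_pos hnn, rookWalkCount_eq_bF]
    have e : (fun j => ((Function.update (Function.update v i0 (v i0 + 1)) i1 (v i1 - 1)) j).toNat)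
        = Function.update v' i0 (m + 1) := by
      refine ev _ _ fun j => ?_
      rw [hv']
      rcases eq_or_ne j i0 with rfl | hne0
      · rw [Function.update_self, Function.update_of_ne hne, Function.update_self]
        have := hcast j; omega
      rw [Function.update_of_ne hne0]
      rcases eq_or_ne j i1 with rfl | hne1
      · rw [Function.update_self, Function.update_self]
        have := hcast j; omega
      · rw [Function.update_of_ne hne1, Function.update_of_ne hne1,
          Function.update_of_ne hne0]
        exact hcast j
    rw [e]
    have hco : v i0 + 1 = ((m + 1 : ℕ) : ℤ) := by have := hcast i0; omega
    rw [hco]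
  -- the two instances of the second-difference identity
  have E1 : n * bF d vN + (n - 2) * bF d (Function.update vN i1 (n - 2))
      = 2 * (n - 1) * bF d v' + BF d v' := by
    have h := keyL d v' i1
    rw [hv'i1] at h
    have e1 : n - 1 + 1 = n := by omega
    have e2 : n - 1 - 1 = n - 2 := by omega
    rw [e1, e2] at h
    have e3 : Function.update v' i1 n = vN := by
      rw [hv', Function.update_idem, hn, Function.update_eq_self]
    have e4 : Function.update v' i1 (n - 2) = Function.update vN i1 (n - 2) := by
      rw [hv', Function.update_idem]
    rw [e3, e4] at h
    exact h
  have E2 : (m + 1) * bF d (Function.update v' i0 (m + 1))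
        + (m - 1) * bF d (Function.update v' i0 (m - 1))
      = 2 * m * bF d v' + BF d v' := by
    have h := keyL d v' i0
    rw [hv'i0] at h
    exact h
  -- cast to ℤ and finish
  have E1' : (n : ℤ) * (bF d vN : ℤ)
        + ((n - 2 : ℕ) : ℤ) * (bF d (Function.update vN i1 (n - 2)) : ℤ)
      = 2 * ((n : ℤ) - 1) * (bF d v' : ℤ) + (BF d v' : ℤ) := by
    have h := congrArg (fun t : ℕ => (t : ℤ)) E1
    push_cast at h
    have hc : ((n - 1 : ℕ) : ℤ) = (n : ℤ) - 1 := by omega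
    rw [← hc]
    exact_mod_cast h
  have E2' : ((m : ℤ) + 1) * (bF d (Function.update v' i0 (m + 1)) : ℤ)
        + ((m - 1 : ℕ) : ℤ) * (bF d (Function.update v' i0 (m - 1)) : ℤ)
      = 2 * (m : ℤ) * (bF d v' : ℤ) + (BF d v' : ℤ) := by
    have h := congrArg (fun t : ℕ => (t : ℤ)) E2
    push_cast at h
    exact_mod_cast h
  rw [c0, A1, A2, A3, c4]
  have hvi1 : v i1 = (n : ℤ) := (hcast i1).symm
  have hvi0 : v i0 = (m : ℤ) := (hcast i0).symm
  rw [hvi1, hvi0]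
  have hc1 : (2 : ℤ) * (n : ℤ) - 2 * (m : ℤ) - 2 = 2 * ((n : ℤ) - 1) - 2 * (m : ℤ) := by ring
  rw [hc1]
  push_cast
  push_cast at E1' E2'
  linear_combination E1' - E2'

/-- For `d ≥ 2`, the extended rook walk numbers satisfy, for all
`n₁,…,n_{d-1} ≥ 0` and `n_d ≥ 1`:
`n_d·a(…,n_{d-1},n_d) = (n_{d-1}−1)·a(…,n_{d-1}−1,n_d−1)
 + (n_{d-1}+1)·a(…,n_{d-1}+1,n_d−1) + (2−n_d)·a(…,n_{d-1},n_d−2)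
 + (2n_d−2n_{d-1}−2)·a(…,n_{d-1},n_d−1)`  (in `ℤ`). -/
theorem rook_two_index_recurrence (d : ℕ) (hd : 2 ≤ d) (v : Fin d → ℤ)
    (hpos : ∀ i, 0 ≤ v i) (hlast : 1 ≤ v ⟨d - 1, by omega⟩) :
    v ⟨d - 1, by omega⟩ * (rookWalkCountZ d v : ℤ)
      = (v ⟨d - 2, by omega⟩ - 1) *
          (rookWalkCountZ d (Function.update
            (Function.update v ⟨d - 2, by omega⟩ (v ⟨d - 2, by omega⟩ - 1))
            ⟨d - 1, by omega⟩ (v ⟨d - 1, by omega⟩ - 1)) : ℤ)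
      + (v ⟨d - 2, by omega⟩ + 1) *
          (rookWalkCountZ d (Function.update
            (Function.update v ⟨d - 2, by omega⟩ (v ⟨d - 2, by omega⟩ + 1))
            ⟨d - 1, by omega⟩ (v ⟨d - 1, by omega⟩ - 1)) : ℤ)
      + (2 - v ⟨d - 1, by omega⟩) *
          (rookWalkCountZ d (Function.update v
            ⟨d - 1, by omega⟩ (v ⟨d - 1, by omega⟩ - 2)) : ℤ)
      + (2 * v ⟨d - 1, by omega⟩ - 2 * v ⟨d - 2, by omega⟩ - 2) *
          (rookWalkCountZ d (Function.update v
            ⟨d - 1, by omega⟩ (v ⟨d - 1, by omega⟩ - 1)) : ℤ) := by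
  have hne : (⟨d - 2, by omega⟩ : Fin d) ≠ ⟨d - 1, by omega⟩ := by
    simp only [ne_eq, Fin.mk.injEq]
    omega
  exact main_aux d v hpos ⟨d - 2, by omega⟩ ⟨d - 1, by omega⟩ hne hlast
end

section
/- The 2-dimensional rook walk numbers satisfy the constant-coefficient recurrence a(n,m) = 2·a(n−1,m) + 2·a(n,m−1) − 3·a(n−1,m−1) for all n ≥ 2 and m ≥ 2. -/
namespace RookAux

abbrev Walk := List (Fin 2 × ℕ)

def xs (L : Walk) : ℕ := (L.map (fun s => if s.1 = 0 then s.2 else 0)).sum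
def ys (L : Walk) : ℕ := (L.map (fun s => if s.1 = 1 then s.2 else 0)).sum

lemma mem_rw {L : Walk} {n m : ℕ} :
    L ∈ RookWalks 2 ![n, m] ↔ (∀ s ∈ L, 0 < s.2) ∧ xs L = n ∧ ys L = m := by
  simp only [RookWalks, Set.mem_setOf_eq, Fin.forall_fin_two, xs, ys,
    Matrix.cons_val_zero, Matrix.cons_val_one, Matrix.head_cons]

lemma xs_append (L : Walk) (s : Fin 2 × ℕ) :
    xs (L ++ [s]) = xs L + (if s.1 = 0 then s.2 else 0) := by
  simp [xs]

lemma ys_append (L : Walk) (s : Fin 2 × ℕ) :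
    ys (L ++ [s]) = ys L + (if s.1 = 1 then s.2 else 0) := by
  simp [ys]

lemma rw_zero : RookWalks 2 ![0, 0] = {([] : Walk)} := by
  ext L
  simp only [Set.mem_singleton_iff, mem_rw]
  constructor
  · rintro ⟨hpos, hx, hy⟩
    rcases L with _ | ⟨s, L⟩
    · rfl
    · exfalso
      have hs := hpos s (by simp)
      have h2 : s.1 = 0 ∨ s.1 = 1 := by omega
      simp only [xs, ys, List.map_cons, List.sum_cons] at hx hy
      rcases h2 with h | h <;> simp [h] at hx hy <;> omega
  · rintro rfl
    exact ⟨by simp, by simp [xs], by simp [ys]⟩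

/-- Removing the last step: decomposition of the walk set. -/
lemma decomp (n m : ℕ) (h : n + m ≠ 0) :
    RookWalks 2 ![n, m] =
      (⋃ k ∈ Finset.range n,
        (fun L : Walk => L ++ [((0 : Fin 2), n - k)]) '' RookWalks 2 ![k, m]) ∪
      (⋃ k ∈ Finset.range m,
        (fun L : Walk => L ++ [((1 : Fin 2), m - k)]) '' RookWalks 2 ![n, k]) := by
  ext L
  constructor
  · intro hL
    obtain ⟨hpos, hx, hy⟩ := mem_rw.mp hL
    have hne : L ≠ [] := by
      rintro rfl
      simp [xs, ys] at hx hy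
      omega
    set s := L.getLast hne with hsdef
    have hSplit : L.dropLast ++ [s] = L := List.dropLast_append_getLast hne
    have hs2 : 0 < s.2 := hpos s (List.getLast_mem hne)
    have hxs : xs L.dropLast + (if s.1 = 0 then s.2 else 0) = n := by
      rw [← xs_append, hSplit, hx]
    have hys : ys L.dropLast + (if s.1 = 1 then s.2 else 0) = m := by
      rw [← ys_append, hSplit, hy]
    have h2 : s.1 = 0 ∨ s.1 = 1 := by omega
    rcases h2 with h1 | h1
    · left
      rw [h1] at hxs hys
      simp at hxs hys
      refine Set.mem_biUnion (Finset.mem_range.mpr (show xs L.dropLast < n by omega)) ?_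
      refine ⟨L.dropLast, mem_rw.mpr ⟨fun t ht => hpos t (List.dropLast_subset _ ht), rfl, hys⟩, ?_⟩
      have : n - xs L.dropLast = s.2 := by omega
      rw [this]
      simp only [← h1]
      rw [hsdef, Prod.mk.eta, hSplit]
    · right
      rw [h1] at hxs hys
      simp at hxs hys
      refine Set.mem_biUnion (Finset.mem_range.mpr (show ys L.dropLast < m by omega)) ?_
      refine ⟨L.dropLast, mem_rw.mpr ⟨fun t ht => hpos t (List.dropLast_subset _ ht), hxs, rfl⟩, ?_⟩
      have : m - ys L.dropLast = s.2 := by omega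
      rw [this]
      simp only [← h1]
      rw [hsdef, Prod.mk.eta, hSplit]
  · intro hL
    rcases hL with hL | hL
    · obtain ⟨k, hk, L', hL', rfl⟩ := by simpa using hL
      obtain ⟨hpos, hxL, hyL⟩ := mem_rw.mp hL'
      refine mem_rw.mpr ⟨?_, ?_, ?_⟩
      · intro t ht
        rcases List.mem_append.mp ht with h | h
        · exact hpos t h
        · simp at h; subst h; simpa using Nat.sub_pos_of_lt hk
      · rw [xs_append]; simp [hxL]; omega
      · rw [ys_append]; simp [hyL]
    · obtain ⟨k, hk, L', hL', rfl⟩ := by simpa using hL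
      obtain ⟨hpos, hxL, hyL⟩ := mem_rw.mp hL'
      refine mem_rw.mpr ⟨?_, ?_, ?_⟩
      · intro t ht
        rcases List.mem_append.mp ht with h | h
        · exact hpos t h
        · simp at h; subst h; simpa using Nat.sub_pos_of_lt hk
      · rw [xs_append]; simp [hxL]
      · rw [ys_append]; simp [hyL]; omega

end RookAux

namespace RookAux

lemma rw_finite : ∀ (n m : ℕ), (RookWalks 2 ![n, m]).Finite := by
  have key : ∀ N n m, n + m ≤ N → (RookWalks 2 ![n, m]).Finite := by
    intro N
    induction N with
    | zero =>
      intro n m h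
      obtain ⟨rfl, rfl⟩ : n = 0 ∧ m = 0 := by omega
      rw [rw_zero]; exact Set.finite_singleton _
    | succ N ih =>
      intro n m h
      by_cases h0 : n + m = 0
      · obtain ⟨rfl, rfl⟩ : n = 0 ∧ m = 0 := by omega
        rw [rw_zero]; exact Set.finite_singleton _
      · rw [decomp n m h0]
        refine Set.Finite.union ?_ ?_
        · refine Set.Finite.biUnion (Finset.range n).finite_toSet ?_
          intro k hk
          simp only [Finset.coe_sort_coe, Finset.mem_coe, Finset.mem_range] at hk
          exact (ih k m (by omega)).image _
        · refine Set.Finite.biUnion (Finset.range m).finite_toSet ?_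
          intro k hk
          simp only [Finset.coe_sort_coe, Finset.mem_coe, Finset.mem_range] at hk
          exact (ih n k (by omega)).image _
  exact fun n m => key (n + m) n m le_rfl

lemma ncard_finset_biUnion {α β : Type*} (s : Finset β) (f : β → Set α)
    (hf : ∀ b ∈ s, (f b).Finite)
    (hd : ∀ b₁ ∈ s, ∀ b₂ ∈ s, b₁ ≠ b₂ → Disjoint (f b₁) (f b₂)) :
    (⋃ b ∈ s, f b).ncard = ∑ b ∈ s, (f b).ncard := by
  classical
  induction s using Finset.induction with
  | empty => simp
  | @insert a s ha ih =>
    rw [Finset.set_biUnion_insert, Finset.sum_insert ha,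
      Set.ncard_union_eq ?_ (hf a (Finset.mem_insert_self a s)) ?_,
      ih (fun b hb => hf b (Finset.mem_insert_of_mem hb))
        (fun b₁ h₁ b₂ h₂ hne => hd b₁ (Finset.mem_insert_of_mem h₁) b₂ (Finset.mem_insert_of_mem h₂) hne)]
    · rw [Set.disjoint_iUnion₂_right]
      intro b hb
      exact hd a (Finset.mem_insert_self a s) b (Finset.mem_insert_of_mem hb)
        (fun hab => ha (hab ▸ hb))
    · exact Set.Finite.biUnion (s.finite_toSet)
        (fun b hb => hf b (Finset.mem_insert_of_mem (by simpa using hb)))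

lemma last_of_mem_image {c : Fin 2 × ℕ} {S : Set Walk} {L : Walk}
    (h : L ∈ (fun L : Walk => L ++ [c]) '' S) : L.getLast? = some c := by
  obtain ⟨L', _, rfl⟩ := h
  exact List.getLast?_concat

lemma count_rec (n m : ℕ) (h : n + m ≠ 0) :
    rookWalkCount 2 ![n, m]
      = ∑ k ∈ Finset.range n, rookWalkCount 2 ![k, m]
        + ∑ k ∈ Finset.range m, rookWalkCount 2 ![n, k] := by
  unfold rookWalkCount
  rw [decomp n m h]
  have hfin1 : (⋃ k ∈ Finset.range n,
      (fun L : Walk => L ++ [((0 : Fin 2), n - k)]) '' RookWalks 2 ![k, m]).Finite :=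
    Set.Finite.biUnion (Finset.range n).finite_toSet (fun k _ => (rw_finite k m).image _)
  have hfin2 : (⋃ k ∈ Finset.range m,
      (fun L : Walk => L ++ [((1 : Fin 2), m - k)]) '' RookWalks 2 ![n, k]).Finite :=
    Set.Finite.biUnion (Finset.range m).finite_toSet (fun k _ => (rw_finite n k).image _)
  rw [Set.ncard_union_eq ?_ hfin1 hfin2]
  · rw [ncard_finset_biUnion _ _ (fun k _ => (rw_finite k m).image _) ?_,
      ncard_finset_biUnion _ _ (fun k _ => (rw_finite n k).image _) ?_]
    · congr 1
      · exact Finset.sum_congr rfl fun k _ =>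
          Set.ncard_image_of_injective _ (List.append_left_injective _)
      · exact Finset.sum_congr rfl fun k _ =>
          Set.ncard_image_of_injective _ (List.append_left_injective _)
    · intro k₁ h₁ k₂ h₂ hne
      rw [Set.disjoint_left]
      intro L hL1 hL2
      have e1 := last_of_mem_image hL1
      have e2 := last_of_mem_image hL2
      rw [e1] at e2
      simp only [Option.some_inj, Prod.mk.injEq] at e2
      simp only [Finset.mem_range] at h₁ h₂
      exact hne (by omega)
    · intro k₁ h₁ k₂ h₂ hne
      rw [Set.disjoint_left]
      intro L hL1 hL2
      have e1 := last_of_mem_image hL1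
      have e2 := last_of_mem_image hL2
      rw [e1] at e2
      simp only [Option.some_inj, Prod.mk.injEq] at e2
      simp only [Finset.mem_range] at h₁ h₂
      exact hne (by omega)
  · rw [Set.disjoint_left]
    intro L hL1 hL2
    simp only [Set.mem_iUnion] at hL1 hL2
    obtain ⟨k₁, _, h1⟩ := hL1
    obtain ⟨k₂, _, h2⟩ := hL2
    have e1 := last_of_mem_image h1
    have e2 := last_of_mem_image h2
    rw [e1] at e2
    simp only [Option.some_inj, Prod.mk.injEq] at e2
    exact absurd e2.1 (by omega)

end RookAux

/-- The 2-dimensional rook walk numbers satisfy the constant-coefficient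
recurrence `a(n,m) = 2a(n−1,m) + 2a(n,m−1) − 3a(n−1,m−1)` for `n,m ≥ 2`. -/
theorem rook_two_dim_constant_recurrence (n m : ℕ) (hn : 2 ≤ n) (hm : 2 ≤ m) :
    (rookWalkCount 2 ![n, m] : ℤ)
      = 2 * (rookWalkCount 2 ![n - 1, m] : ℤ)
        + 2 * (rookWalkCount 2 ![n, m - 1] : ℤ)
        - 3 * (rookWalkCount 2 ![n - 1, m - 1] : ℤ) := by
  obtain ⟨n', rfl⟩ : ∃ n', n = n' + 1 := ⟨n - 1, by omega⟩
  obtain ⟨m', rfl⟩ : ∃ m', m = m' + 1 := ⟨m - 1, by omega⟩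
  have hn' : 1 ≤ n' := by omega
  have hm' : 1 ≤ m' := by omega
  simp only [Nat.add_sub_cancel]
  have e1 := RookAux.count_rec (n' + 1) (m' + 1) (by omega)
  have e2 := RookAux.count_rec n' (m' + 1) (by omega)
  have e3 := RookAux.count_rec (n' + 1) m' (by omega)
  have e4 := RookAux.count_rec n' m' (by omega)
  rw [Finset.sum_range_succ, Finset.sum_range_succ] at e1
  rw [Finset.sum_range_succ] at e2 e3
  set S1 := ∑ k ∈ Finset.range n', rookWalkCount 2 ![k, m' + 1] with hS1
  set S2 := ∑ k ∈ Finset.range m', rookWalkCount 2 ![n' + 1, k] with hS2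
  set S3 := ∑ k ∈ Finset.range n', rookWalkCount 2 ![k, m'] with hS3
  set S4 := ∑ k ∈ Finset.range m', rookWalkCount 2 ![n', k] with hS4
  zify at e1 e2 e3 e4
  linarith
end
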